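/- arXiv:0707.3898 — 5 statements merged into one kernel-verified Lean document; each statement's English description precedes it below -/
import Mathlib

section
/- Let Γ be a bounded Borel subset of ℝ^d with |Γ| > 0 such that |∂_r(Γ)| = O(r) as r ↓ 0. Then n_λ(Γ) − λ|Γ| = O(λ^{(d−1)/d}) as λ → ∞; that is, there exist constants C ∈ (0,∞) and λ_0 ≥ 1 such that for all λ ≥ λ_0, 0 ≤ n_λ(Γ) − λ|Γ| ≤ C λ^{(d−1)/d}. -/
open MeasureTheory Metric Set Pointwise
open scoped ENNReal

noncomputable section

/-- The closed axis-aligned unit cube `x + [-1/2,1/2]^d` in `ℝ^d` (with the sup norm,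
this is the closed ball of radius `1/2` around `x`). -/
def unitCube {d : ℕ} (x : Fin d → ℝ) : Set (Fin d → ℝ) :=
  Metric.closedBall x (1 / 2)

/-- `∂_r(B)`: the set of points within `ℓ_∞`-distance `r` of the topological boundary of `B`
(distance to the empty set being `+∞`). -/
def bdryNbhd {d : ℕ} (r : ℝ) (B : Set (Fin d → ℝ)) : Set (Fin d → ℝ) :=
  {x | EMetric.infEdist x (frontier B) ≤ ENNReal.ofReal r}

/-- The dilation `λ^{1/d} B`. -/
def dilate {d : ℕ} (lam : ℝ) (B : Set (Fin d → ℝ)) : Set (Fin d → ℝ) :=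
  (lam ^ (1 / (d : ℝ))) • B

/-- `Z_λ(B)`: the lattice points whose unit cube meets `λ^{1/d} B`. -/
def Zlat {d : ℕ} (lam : ℝ) (B : Set (Fin d → ℝ)) : Set (Fin d → ℤ) :=
  {z | (unitCube (fun i => (z i : ℝ)) ∩ dilate lam B).Nonempty}

/-- `n_λ(B)`: the number of cubes in the covering of `λ^{1/d} B`. -/
def nlat {d : ℕ} (lam : ℝ) (B : Set (Fin d → ℝ)) : ℕ :=
  (Zlat lam B).ncard

/-- A preconnected set meeting both `s` and its complement meets the frontier of `s`. -/
lemma aux_preconnected_frontier {α : Type*} [TopologicalSpace α]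
    {t s : Set α} (ht : IsPreconnected t) (h1 : (t ∩ s).Nonempty)
    (h2 : (t \ s).Nonempty) : (t ∩ frontier s).Nonempty := by
  by_contra h
  rw [Set.not_nonempty_iff_eq_empty] at h
  have hfro : ∀ x ∈ t, x ∉ frontier s := fun x hx hf =>
    Set.eq_empty_iff_forall_notMem.1 h x ⟨hx, hf⟩
  have hsub : t ⊆ interior s ∪ interior sᶜ := by
    intro x hx
    by_cases hc : x ∈ closure s
    · exact Or.inl (by_contra fun hi => hfro x hx ⟨hc, hi⟩)
    · exact Or.inr (by rwa [interior_compl, Set.mem_compl_iff])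
  have h1' : (t ∩ interior s).Nonempty := by
    obtain ⟨x, hxt, hxs⟩ := h1
    refine ⟨x, hxt, ?_⟩
    rcases hsub hxt with h' | h'
    · exact h'
    · exact absurd hxs (interior_subset h')
  have h2' : (t ∩ interior sᶜ).Nonempty := by
    obtain ⟨x, hxt, hxs⟩ := h2
    refine ⟨x, hxt, ?_⟩
    rcases hsub hxt with h' | h'
    · exact absurd (interior_subset h') hxs
    · exact h'
  obtain ⟨z, hzt, hz1, hz2⟩ := ht _ _ isOpen_interior isOpen_interior hsub h1' h2'
  exact (interior_subset hz2) (interior_subset hz1)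

/-- Essential disjointness: the unit cubes around distinct lattice points overlap in
measure zero, so the sum of the volumes of their intersections with any measurable set
is at most the volume of that set. -/
lemma aux_sum_cubes_le {d : ℕ} (hd : 1 ≤ d) {A : Set (Fin d → ℝ)}
    (hA : MeasurableSet A) (S : Finset (Fin d → ℤ)) :
    ∑ z ∈ S, volume (unitCube (fun i => (z i : ℝ)) ∩ A) ≤ volume A := by
  have hnt : Nontrivial (Fin d → ℝ) :=
    ⟨fun _ => 0, fun _ => 1, fun h => by
      have := congrFun h ⟨0, hd⟩; norm_num at this⟩
  have hvol : ∀ x : Fin d → ℝ, volume (unitCube x ∩ A) = volume (ball x (1/2) ∩ A) := by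
    intro x
    apply le_antisymm
    · have hsub : unitCube x ∩ A ⊆ (ball x (1/2) ∩ A) ∪ sphere x (1/2) := by
        intro y hy
        rcases lt_or_eq_of_le (mem_closedBall.1 hy.1) with h | h
        · exact Or.inl ⟨h, hy.2⟩
        · exact Or.inr h
      calc volume (unitCube x ∩ A) ≤ volume ((ball x (1/2) ∩ A) ∪ sphere x (1/2)) :=
            measure_mono hsub
        _ ≤ volume (ball x (1/2) ∩ A) + volume (sphere x (1/2)) := measure_union_le _ _
        _ = volume (ball x (1/2) ∩ A) := by
            rw [Measure.addHaar_sphere, add_zero]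
    · exact measure_mono (inter_subset_inter_left _ ball_subset_closedBall)
  have hdisj : (↑S : Set (Fin d → ℤ)).PairwiseDisjoint
      (fun z => ball (fun i => (z i : ℝ)) (1/2) ∩ A) := by
    intro z _ w _ hzw
    refine Set.disjoint_of_subset inter_subset_left inter_subset_left ?_
    rw [Set.disjoint_left]
    intro y hy1 hy2
    obtain ⟨i, hi⟩ := Function.ne_iff.1 hzw
    have h1 : (1 : ℝ) ≤ |(z i : ℝ) - (w i : ℝ)| := by
      have : (1 : ℤ) ≤ |z i - w i| := Int.one_le_abs (sub_ne_zero.2 hi)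
      exact_mod_cast this
    have hzi : dist ((z i : ℝ)) ((w i : ℝ))
        ≤ dist (fun i => (z i : ℝ)) (fun i => (w i : ℝ)) :=
      dist_le_pi_dist (fun j => (z j : ℝ)) (fun j => (w j : ℝ)) i
    have hd1 : (1 : ℝ) ≤ dist (fun i => (z i : ℝ)) (fun i => (w i : ℝ)) := by
      refine le_trans ?_ hzi
      simpa [Real.dist_eq] using h1
    have : dist (fun i => (z i : ℝ)) (fun i => (w i : ℝ)) < 1 := by
      calc dist (fun i => (z i : ℝ)) (fun i => (w i : ℝ))
          ≤ dist (fun i => (z i : ℝ)) y + dist y (fun i => (w i : ℝ)) := dist_triangle _ _ _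
        _ < 1/2 + 1/2 := by
            have := mem_ball.1 hy1
            have := mem_ball.1 hy2
            rw [dist_comm (fun i => (z i : ℝ)) y]
            linarith [mem_ball.1 hy1, mem_ball.1 hy2]
        _ = 1 := by norm_num
    linarith
  calc ∑ z ∈ S, volume (unitCube (fun i => (z i : ℝ)) ∩ A)
      = ∑ z ∈ S, volume (ball (fun i => (z i : ℝ)) (1/2) ∩ A) :=
        Finset.sum_congr rfl fun z _ => hvol _
    _ = volume (⋃ z ∈ S, ball (fun i => (z i : ℝ)) (1/2) ∩ A) :=
        (measure_biUnion_finset hdisj fun z _ => measurableSet_ball.inter hA).symm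
    _ ≤ volume A := measure_mono (by
        simp only [Set.iUnion_subset_iff]
        exact fun z _ => inter_subset_right)

lemma aux_frontier_smul {d : ℕ} {c : ℝ} (hc : c ≠ 0) (s : Set (Fin d → ℝ)) :
    frontier (c • s) = c • frontier s := by
  rw [frontier, frontier, closure_smul₀' hc, interior_smul₀ hc, Set.smul_set_sdiff₀ hc]

lemma aux_bdryNbhd_closed {d : ℕ} (r : ℝ) (B : Set (Fin d → ℝ)) :
    IsClosed (bdryNbhd r B) :=
  isClosed_le (EMetric.continuous_infEdist) continuous_const

lemma aux_bdryNbhd_bounded {d : ℕ} {r : ℝ} (hr : 0 ≤ r) {B : Set (Fin d → ℝ)}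
    (hB : Bornology.IsBounded B) : Bornology.IsBounded (bdryNbhd r B) := by
  obtain ⟨R, hR⟩ := hB.subset_closedBall 0
  rw [Metric.isBounded_iff_subset_closedBall 0]
  refine ⟨R + r + 1, fun x hx => ?_⟩
  have hx' : EMetric.infEdist x (frontier B) ≤ ENNReal.ofReal r := hx
  have hlt : EMetric.infEdist x (frontier B) < ENNReal.ofReal (r + 1) := by
    refine lt_of_le_of_lt hx' ?_
    rw [ENNReal.ofReal_lt_ofReal_iff (by linarith)]
    linarith
  obtain ⟨y, hy, hxy⟩ := EMetric.infEdist_lt_iff.1 hlt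
  have hdist : dist x y < r + 1 := by
    rw [← ENNReal.ofReal_lt_ofReal_iff_of_nonneg dist_nonneg, ← edist_dist]
    exact hxy
  have hyB : y ∈ Metric.closedBall (0 : Fin d → ℝ) R := by
    have h1 : y ∈ closure B := frontier_subset_closure hy
    have h2 : closure B ⊆ Metric.closedBall (0 : Fin d → ℝ) R :=
      closure_minimal hR Metric.isClosed_closedBall
    exact h2 h1
  rw [mem_closedBall]
  calc dist x 0 ≤ dist x y + dist y 0 := dist_triangle _ _ _
    _ ≤ (r + 1) + R := add_le_add hdist.le (mem_closedBall.1 hyB)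
    _ = R + r + 1 := by ring

lemma aux_zlat_finite {d : ℕ} (lam : ℝ) {Γ : Set (Fin d → ℝ)}
    (hbdd : Bornology.IsBounded Γ) : (Zlat lam Γ).Finite := by
  have hA : Bornology.IsBounded (dilate lam Γ) := hbdd.smul₀ _
  obtain ⟨R, hR⟩ := hA.subset_closedBall 0
  have hsub : Zlat lam Γ ⊆ Set.pi Set.univ
      (fun _ : Fin d => (Set.Icc (⌈-(R+1)⌉) (⌊R+1⌋) : Set ℤ)) := by
    rintro z ⟨x, hxc, hxA⟩
    intro i _
    have h1 : dist x (fun i => (z i : ℝ)) ≤ 1/2 := mem_closedBall.1 hxc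
    have h2 : dist x 0 ≤ R := mem_closedBall.1 (hR hxA)
    have ha : dist (x i) ((z i : ℝ)) ≤ 1/2 :=
      le_trans (dist_le_pi_dist x (fun j => (z j : ℝ)) i) h1
    have hb : dist (x i) (0 : ℝ) ≤ R :=
      le_trans (dist_le_pi_dist x (0 : Fin d → ℝ) i) h2
    rw [Real.dist_eq] at ha hb
    simp only [sub_zero] at hb
    have h3 : |(z i : ℝ)| ≤ R + 1 := by
      have := abs_sub_abs_le_abs_sub ((z i : ℝ)) (x i)
      rw [abs_sub_comm (x i)] at ha
      linarith [abs_nonneg (x i), (abs_sub_abs_le_abs_sub ((z i : ℝ)) (x i))]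
    rw [abs_le] at h3
    constructor
    · exact Int.ceil_le.2 (by exact_mod_cast h3.1)
    · exact Int.le_floor.2 (by exact_mod_cast h3.2)
  exact (Set.Finite.pi (fun i => Set.finite_Icc _ _)).subset hsub

theorem covering_count_asymptotics (d : ℕ) (hd : 1 ≤ d)
    (Γ : Set (Fin d → ℝ)) (hbdd : Bornology.IsBounded Γ) (hmeas : MeasurableSet Γ)
    (hpos : 0 < volume Γ)
    -- regularity: `|∂_r(Γ)| = O(r)` as `r ↓ 0`
    (hreg : ∃ C₀ r₀ : ℝ, 0 < C₀ ∧ 0 < r₀ ∧ ∀ r : ℝ, 0 < r → r ≤ r₀ →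
      (volume (bdryNbhd r Γ)).toReal ≤ C₀ * r) :
    ∃ C : ℝ, 0 < C ∧ ∃ lam₀ : ℝ, 1 ≤ lam₀ ∧ ∀ lam : ℝ, lam₀ ≤ lam →
      lam * (volume Γ).toReal ≤ (nlat lam Γ : ℝ) ∧
      (nlat lam Γ : ℝ) - lam * (volume Γ).toReal ≤ C * lam ^ (((d : ℝ) - 1) / d) := by
  classical
  obtain ⟨C₀, r₀, hC₀, hr₀, hreg⟩ := hreg
  refine ⟨C₀, hC₀, max 1 (r₀⁻¹ ^ d), le_max_left _ _, fun lam hlam => ?_⟩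
  have hlam1 : (1:ℝ) ≤ lam := le_trans (le_max_left _ _) hlam
  have hlam0 : (0:ℝ) < lam := lt_of_lt_of_le one_pos hlam1
  set c : ℝ := lam ^ (1 / (d:ℝ)) with hc_def
  have hd' : d ≠ 0 := Nat.one_le_iff_ne_zero.1 hd
  have hdne : (d:ℝ) ≠ 0 := Nat.cast_ne_zero.mpr hd'
  have hc0 : 0 < c := Real.rpow_pos_of_pos hlam0 _
  have hcd : c ^ d = lam := by
    rw [hc_def, ← Real.rpow_natCast (lam ^ (1/(d:ℝ))) d, ← Real.rpow_mul hlam0.le]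
    rw [one_div, inv_mul_cancel₀ hdne, Real.rpow_one]
  have hcr : c⁻¹ ≤ r₀ := by
    have h1 : r₀⁻¹ ^ d ≤ lam := le_trans (le_max_right _ _) hlam
    have h2 : r₀⁻¹ ≤ c := by
      rw [← pow_le_pow_iff_left₀ (inv_pos.2 hr₀).le hc0.le hd', hcd]
      exact h1
    calc c⁻¹ ≤ (r₀⁻¹)⁻¹ := inv_anti₀ (inv_pos.2 hr₀) h2
      _ = r₀ := inv_inv r₀
  set A := dilate lam Γ with hA_def
  have hAeq : A = c • Γ := rfl
  have hAmeas : MeasurableSet A := hmeas.const_smul_of_ne_zero hc0.ne'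
  have hfinrank : Module.finrank ℝ (Fin d → ℝ) = d := Module.finrank_fin_fun ℝ
  have hvolA : volume A = ENNReal.ofReal lam * volume Γ := by
    rw [hAeq, Measure.addHaar_smul_of_nonneg volume hc0.le, hfinrank, hcd]
  have hΓfin : volume Γ ≠ ⊤ := hbdd.measure_lt_top.ne
  have hAfin : volume A ≠ ⊤ := by
    rw [hvolA]; exact ENNReal.mul_ne_top ENNReal.ofReal_ne_top hΓfin
  have hvolA_real : (volume A).toReal = lam * (volume Γ).toReal := by
    rw [hvolA, ENNReal.toReal_mul, ENNReal.toReal_ofReal hlam0.le]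
  have hfin : (Zlat lam Γ).Finite := aux_zlat_finite lam hbdd
  set S : Finset (Fin d → ℤ) := hfin.toFinset with hS_def
  have hncard : (nlat lam Γ : ℕ) = S.card := by
    rw [nlat, Set.ncard_eq_toFinset_card _ hfin]
  have hcube_vol : ∀ z : Fin d → ℝ, volume (unitCube z) = 1 := by
    intro z
    rw [unitCube, Real.volume_pi_closedBall _ (by norm_num : (0:ℝ) ≤ 1/2)]
    norm_num
  -- Lower bound
  have hlower_en : volume A ≤ (S.card : ℝ≥0∞) := by
    have hcover : A ⊆ ⋃ z ∈ S, (unitCube (fun i => ((z i : ℤ) : ℝ)) ∩ A) := by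
      intro x hx
      have hcube : x ∈ unitCube (fun i => ((round (x i) : ℤ) : ℝ)) := by
        rw [unitCube, mem_closedBall]
        refine dist_pi_le_iff (by norm_num) |>.2 fun i => ?_
        rw [Real.dist_eq]
        exact abs_sub_round (x i)
      have hz : (fun i => round (x i)) ∈ S :=
        hfin.mem_toFinset.2 ⟨x, hcube, hx⟩
      exact Set.mem_biUnion hz ⟨hcube, hx⟩
    calc volume A ≤ ∑ z ∈ S, volume (unitCube (fun i => ((z i : ℤ) : ℝ)) ∩ A) :=
          le_trans (measure_mono hcover) (measure_biUnion_finset_le S _)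
      _ ≤ ∑ _z ∈ S, 1 := Finset.sum_le_sum fun z _ =>
          le_trans (measure_mono inter_subset_left) (le_of_eq (hcube_vol _))
      _ = S.card := by simp
  have hlower : lam * (volume Γ).toReal ≤ (S.card : ℝ) := by
    have h := ENNReal.toReal_mono (by simp) hlower_en
    rwa [hvolA_real, ENNReal.toReal_natCast] at h
  -- Upper bound
  set Sin := S.filter (fun z => unitCube (fun i => ((z i : ℤ) : ℝ)) ⊆ A) with hSin_def
  set Sbd := S.filter (fun z => ¬ unitCube (fun i => ((z i : ℤ) : ℝ)) ⊆ A) with hSbd_def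
  have hsplit : Sin.card + Sbd.card = S.card :=
    Finset.card_filter_add_card_filter_not _
  have hin_en : (Sin.card : ℝ≥0∞) ≤ volume A := by
    calc (Sin.card : ℝ≥0∞) = ∑ _z ∈ Sin, 1 := by simp
      _ = ∑ z ∈ Sin, volume (unitCube (fun i => ((z i : ℤ) : ℝ)) ∩ A) :=
          Finset.sum_congr rfl fun z hz => by
            rw [Set.inter_eq_self_of_subset_left (Finset.mem_filter.1 hz).2, hcube_vol]
      _ ≤ volume A := aux_sum_cubes_le hd hAmeas Sin
  have hin_real : (Sin.card : ℝ) ≤ lam * (volume Γ).toReal := by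
    have h := ENNReal.toReal_mono hAfin hin_en
    rwa [hvolA_real, ENNReal.toReal_natCast] at h
  set N : Set (Fin d → ℝ) := {x | EMetric.infEdist x (frontier A) ≤ 1} with hN_def
  have hNmeas : MeasurableSet N :=
    (isClosed_le EMetric.continuous_infEdist continuous_const).measurableSet
  have hNsub : ∀ z ∈ Sbd, unitCube (fun i => ((z i : ℤ) : ℝ)) ⊆ N := by
    intro z hz
    obtain ⟨hzS, hznot⟩ := Finset.mem_filter.1 hz
    have hzZ : (unitCube (fun i => ((z i : ℤ) : ℝ)) ∩ A).Nonempty := hfin.mem_toFinset.1 hzS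
    have hdiff : (unitCube (fun i => ((z i : ℤ) : ℝ)) \ A).Nonempty := by
      obtain ⟨x, hx, hxA⟩ := Set.not_subset.1 hznot
      exact ⟨x, hx, hxA⟩
    obtain ⟨y, hyc, hyf⟩ := aux_preconnected_frontier
      ((convex_closedBall _ _).isPreconnected) hzZ hdiff
    intro x hx
    show EMetric.infEdist x (frontier A) ≤ 1
    refine le_trans (EMetric.infEdist_le_edist_of_mem hyf) ?_
    have hdist : dist x y ≤ 1 := by
      calc dist x y ≤ dist x (fun i => ((z i : ℤ) : ℝ)) + dist (fun i => ((z i : ℤ) : ℝ)) y :=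
            dist_triangle _ _ _
        _ ≤ 1/2 + 1/2 := add_le_add (mem_closedBall.1 hx)
            (by rw [dist_comm]; exact mem_closedBall.1 hyc)
        _ = 1 := by norm_num
    calc edist x y = ENNReal.ofReal (dist x y) := edist_dist _ _
      _ ≤ ENNReal.ofReal 1 := ENNReal.ofReal_le_ofReal hdist
      _ = 1 := ENNReal.ofReal_one
  have hbd_en : (Sbd.card : ℝ≥0∞) ≤ volume N := by
    calc (Sbd.card : ℝ≥0∞) = ∑ _z ∈ Sbd, 1 := by simp
      _ = ∑ z ∈ Sbd, volume (unitCube (fun i => ((z i : ℤ) : ℝ)) ∩ N) :=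
          Finset.sum_congr rfl fun z hz => by
            rw [Set.inter_eq_self_of_subset_left (hNsub z hz), hcube_vol]
      _ ≤ volume N := aux_sum_cubes_le hd hNmeas Sbd
  have hNeq : N = c • bdryNbhd c⁻¹ Γ := by
    ext x
    rw [Set.mem_smul_set_iff_inv_smul_mem₀ hc0.ne']
    have hx : x = c • (c⁻¹ • x) := (smul_inv_smul₀ hc0.ne' x).symm
    simp only [hN_def, Set.mem_setOf_eq, bdryNbhd]
    rw [hAeq, aux_frontier_smul hc0.ne']
    constructor
    · intro h
      rw [hx, EMetric.infEdist, infEdist_smul₀ hc0.ne'] at h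
      rw [ENNReal.smul_def, smul_eq_mul] at h
      have hc_en : (‖c‖₊ : ℝ≥0∞) = ENNReal.ofReal c := by
        rw [← ENNReal.ofReal_coe_nnreal, coe_nnnorm, Real.norm_eq_abs, abs_of_pos hc0]
      rw [hc_en] at h
      rw [ENNReal.ofReal_inv_of_pos hc0]
      rw [ENNReal.le_inv_iff_mul_le, mul_comm]
      exact h
    · intro h
      rw [hx, EMetric.infEdist, infEdist_smul₀ hc0.ne', ENNReal.smul_def, smul_eq_mul]
      have hc_en : (‖c‖₊ : ℝ≥0∞) = ENNReal.ofReal c := by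
        rw [← ENNReal.ofReal_coe_nnreal, coe_nnnorm, Real.norm_eq_abs, abs_of_pos hc0]
      rw [hc_en]
      rw [ENNReal.ofReal_inv_of_pos hc0, ENNReal.le_inv_iff_mul_le, mul_comm] at h
      exact h
  have hvolN : volume N = ENNReal.ofReal lam * volume (bdryNbhd c⁻¹ Γ) := by
    rw [hNeq, Measure.addHaar_smul_of_nonneg volume hc0.le, hfinrank, hcd]
  have hbN_fin : volume (bdryNbhd c⁻¹ Γ) ≠ ⊤ :=
    ((aux_bdryNbhd_bounded (inv_pos.2 hc0).le hbdd).measure_lt_top).ne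
  have hbN : volume (bdryNbhd c⁻¹ Γ) ≤ ENNReal.ofReal (C₀ * c⁻¹) := by
    rw [← ENNReal.ofReal_toReal hbN_fin]
    exact ENNReal.ofReal_le_ofReal (hreg c⁻¹ (inv_pos.2 hc0) hcr)
  have hbd_real : (Sbd.card : ℝ) ≤ lam * (C₀ * c⁻¹) := by
    have h1 : (Sbd.card : ℝ≥0∞) ≤ ENNReal.ofReal (lam * (C₀ * c⁻¹)) := by
      refine le_trans hbd_en ?_
      rw [hvolN, ENNReal.ofReal_mul hlam0.le]
      exact mul_le_mul_right hbN _
    have h2 := ENNReal.toReal_mono ENNReal.ofReal_ne_top h1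
    rw [ENNReal.toReal_natCast, ENNReal.toReal_ofReal
      (by positivity : (0:ℝ) ≤ lam * (C₀ * c⁻¹))] at h2
    exact h2
  have hfinal : lam * (C₀ * c⁻¹) = C₀ * lam ^ (((d:ℝ) - 1) / d) := by
    have hcinv : c⁻¹ = lam ^ (-(1/(d:ℝ))) := by
      rw [hc_def, ← Real.rpow_neg hlam0.le]
    rw [hcinv]
    have : lam * lam ^ (-(1/(d:ℝ))) = lam ^ ((1:ℝ) + -(1/(d:ℝ))) := by
      rw [Real.rpow_add hlam0, Real.rpow_one]
    have heq : (1:ℝ) + -(1/(d:ℝ)) = ((d:ℝ) - 1) / d := by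
      field_simp
      ring
    calc lam * (C₀ * lam ^ (-(1/(d:ℝ)))) = C₀ * (lam * lam ^ (-(1/(d:ℝ)))) := by ring
      _ = C₀ * lam ^ ((1:ℝ) + -(1/(d:ℝ))) := by rw [this]
      _ = C₀ * lam ^ (((d:ℝ) - 1) / d) := by rw [heq]
  constructor
  · rw [show ((nlat lam Γ : ℕ) : ℝ) = (S.card : ℝ) from by rw [hncard]]
    exact hlower
  · have hcards : ((nlat lam Γ : ℕ) : ℝ) = (Sin.card : ℝ) + (Sbd.card : ℝ) := by
      rw [hncard, ← hsplit]
      push_cast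
      ring
    rw [hcards]
    have := hbd_real
    rw [hfinal] at this
    linarith
end
end

section
/- Let Γ be a bounded Borel subset of ℝ^d with |Γ| > 0 such that |∂_r(Γ)| = O(r) as r ↓ 0, and fix α > 0. For λ > 1 let Γ^bd := {x ∈ Γ : d_∞(x, ∂Γ) ≤ α λ^{-1/d} log λ}. Then n_λ(Γ^bd) − λ|Γ^bd| = O(λ^{(d−1)/d} log λ) as λ → ∞; that is, there exist C ∈ (0,∞) and λ_0 > 1 such that for all λ ≥ λ_0, 0 ≤ n_λ(Γ^bd) − λ|Γ^bd| ≤ C λ^{(d−1)/d} log λ. -/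
open MeasureTheory Metric Set Pointwise Filter
open scoped ENNReal

noncomputable section

/-- The `s`-boundary region of `Γ`: points of `Γ` within `ℓ_∞`-distance `s` of `∂Γ`. -/
def bdRegion {d : ℕ} (s : ℝ) (Γ : Set (Fin d → ℝ)) : Set (Fin d → ℝ) :=
  Γ ∩ bdryNbhd s Γ

lemma bdryNbhd_eq {d : ℕ} (r : ℝ) (B : Set (Fin d → ℝ)) :
    bdryNbhd r B = Metric.cthickening r (frontier B) := rfl

lemma volume_unitCube {d : ℕ} (x : Fin d → ℝ) : volume (unitCube x) = 1 := by
  rw [unitCube, volume_pi_closedBall x (by norm_num : (0:ℝ) ≤ 1/2)]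
  norm_num

lemma volume_unitBall {d : ℕ} (x : Fin d → ℝ) : volume (Metric.ball x (1/2)) = 1 := by
  rw [volume_pi_ball x (by norm_num : (0:ℝ) < 1/2)]
  norm_num

lemma volume_dilate {d : ℕ} (hd : d ≠ 0) {lam : ℝ} (h : 0 < lam) (S : Set (Fin d → ℝ)) :
    volume (dilate lam S) = ENNReal.ofReal lam * volume S := by
  rw [dilate, Measure.addHaar_smul]
  congr 2
  rw [Module.finrank_fintype_fun_eq_card, Fintype.card_fin]
  rw [← Real.rpow_natCast (lam ^ (1 / (d:ℝ))) d, ← Real.rpow_mul h.le]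
  rw [one_div_mul_cancel (by exact_mod_cast hd : (d:ℝ) ≠ 0), Real.rpow_one,
    abs_of_pos h]

lemma vol_lt_top {d : ℕ} {S : Set (Fin d → ℝ)} (h : Bornology.IsBounded S) : volume S < ⊤ := by
  obtain ⟨R, hR⟩ := h.subset_closedBall 0
  exact lt_of_le_of_lt (measure_mono hR) measure_closedBall_lt_top

lemma Zlat_finite {d : ℕ} {lam : ℝ} {B : Set (Fin d → ℝ)} (hB : Bornology.IsBounded B) :
    (Zlat lam B).Finite := by
  have hdil : Bornology.IsBounded (dilate lam B) := by
    rw [dilate]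
    exact Bornology.IsBounded.smul₀ hB _
  obtain ⟨R, hR⟩ := hdil.subset_closedBall 0
  set N : ℤ := ⌈R⌉ + 1 with hN
  apply Set.Finite.subset (Set.finite_Icc (fun _ : Fin d => -N) (fun _ => N))
  rintro z ⟨p, hp1, hp2⟩
  have hzp : dist p (fun i => (z i : ℝ)) ≤ 1/2 := hp1
  have hpR : ‖p‖ ≤ R := by simpa using hR hp2
  have hz : ‖(fun i => (z i : ℝ))‖ ≤ R + 1/2 := by
    have h2 : ‖(fun i => (z i : ℝ)) - p‖ ≤ 1/2 := by
      rw [← dist_eq_norm, dist_comm]; exact hzp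
    have h3 := norm_sub_norm_le (fun i => (z i : ℝ)) p
    linarith
  constructor
  · intro i
    have h1 : |(z i : ℝ)| ≤ R + 1/2 := by
      calc |(z i : ℝ)| = ‖(fun j => (z j : ℝ)) i‖ := rfl
        _ ≤ ‖(fun j => (z j : ℝ))‖ := norm_le_pi_norm (fun j => (z j : ℝ)) i
        _ ≤ R + 1/2 := hz
    have : -((N : ℝ)) ≤ (z i : ℝ) := by
      have hRN : R + 1/2 ≤ (N : ℝ) := by
        push_cast [hN]
        have := Int.le_ceil R
        linarith
      have := neg_abs_le ((z i : ℝ))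
      linarith
    exact_mod_cast this
  · intro i
    have h1 : |(z i : ℝ)| ≤ R + 1/2 := by
      calc |(z i : ℝ)| = ‖(fun j => (z j : ℝ)) i‖ := rfl
        _ ≤ ‖(fun j => (z j : ℝ))‖ := norm_le_pi_norm (fun j => (z j : ℝ)) i
        _ ≤ R + 1/2 := hz
    have : (z i : ℝ) ≤ (N : ℝ) := by
      have hRN : R + 1/2 ≤ (N : ℝ) := by
        push_cast [hN]
        have := Int.le_ceil R
        linarith
      have := le_abs_self ((z i : ℝ))
      linarith
    exact_mod_cast this

lemma lattice_balls_disjoint {d : ℕ} {z w : Fin d → ℤ} (hzw : z ≠ w) :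
    Disjoint (Metric.ball (fun i => (z i:ℝ)) (1/2)) (Metric.ball (fun i => (w i:ℝ)) (1/2)) := by
  apply Metric.ball_disjoint_ball
  obtain ⟨i, hi⟩ := Function.ne_iff.mp hzw
  have h1 : (1:ℝ) ≤ dist ((z i : ℝ)) ((w i : ℝ)) := by
    rw [Real.dist_eq]
    have : (1:ℤ) ≤ |z i - w i| := Int.one_le_abs (sub_ne_zero.mpr hi)
    calc (1:ℝ) ≤ |((z i - w i : ℤ) : ℝ)| := by exact_mod_cast this
    _ = |(z i : ℝ) - (w i : ℝ)| := by push_cast; ring_nf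
  calc (1:ℝ)/2 + 1/2 = 1 := by norm_num
    _ ≤ dist ((z i:ℝ)) ((w i:ℝ)) := h1
    _ ≤ dist (fun i => (z i:ℝ)) (fun i => (w i:ℝ)) := dist_le_pi_dist (fun i => (z i:ℝ)) (fun i => (w i:ℝ)) i

lemma dilate_subset_union {d : ℕ} (lam : ℝ) (B : Set (Fin d → ℝ)) :
    dilate lam B ⊆ ⋃ z ∈ Zlat lam B, unitCube (fun i => (z i : ℝ)) := by
  intro x hx
  set z : Fin d → ℤ := fun i => round (x i) with hz
  have hxz : x ∈ unitCube (fun i => (z i : ℝ)) := by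
    rw [unitCube, Metric.mem_closedBall]
    rw [dist_pi_le_iff (by norm_num : (0:ℝ) ≤ 1/2)]
    intro i
    rw [Real.dist_eq]
    exact abs_sub_round (x i)
  exact Set.mem_biUnion (⟨x, hxz, hx⟩ : (unitCube (fun i => (z i : ℝ)) ∩ dilate lam B).Nonempty) hxz

lemma lower_bound {d : ℕ} (hd : d ≠ 0) {lam : ℝ} (hlam : 0 < lam)
    {B : Set (Fin d → ℝ)} (hB : Bornology.IsBounded B) :
    ENNReal.ofReal lam * volume B ≤ (nlat lam B : ℝ≥0∞) := by
  have hfin := Zlat_finite (lam := lam) hB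
  calc ENNReal.ofReal lam * volume B = volume (dilate lam B) := (volume_dilate hd hlam B).symm
    _ ≤ volume (⋃ z ∈ hfin.toFinset, unitCube (fun i => (z i : ℝ))) := by
        apply measure_mono
        intro x hx
        obtain ⟨z, hz, hxz⟩ := Set.mem_iUnion₂.mp (dilate_subset_union lam B hx)
        exact Set.mem_iUnion₂.mpr ⟨z, hfin.mem_toFinset.mpr hz, hxz⟩
    _ ≤ ∑ z ∈ hfin.toFinset, volume (unitCube (fun i => (z i : ℝ))) :=
        measure_biUnion_finset_le _ _
    _ = hfin.toFinset.card := by simp [volume_unitCube]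
    _ = (nlat lam B : ℝ≥0∞) := by rw [nlat, Set.ncard_eq_toFinset_card _ hfin]

lemma upper_bound {d : ℕ} (hd : d ≠ 0) {lam s : ℝ} (hlam : 0 < lam) (hs : 0 ≤ s)
    {Γ B : Set (Fin d → ℝ)} (hB : Bornology.IsBounded B)
    (hsub : B ⊆ bdryNbhd s Γ) :
    (nlat lam B : ℝ≥0∞) ≤ ENNReal.ofReal lam *
      volume (bdryNbhd (s + (lam ^ (1/(d:ℝ)))⁻¹) Γ) := by
  have hfin := Zlat_finite (lam := lam) hB
  set c := lam ^ (1/(d:ℝ)) with hc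
  have hcpos : 0 < c := Real.rpow_pos_of_pos hlam _
  have key : ∀ z ∈ hfin.toFinset, Metric.ball (fun i => (z i:ℝ)) (1/2) ⊆
      dilate lam (bdryNbhd (s + c⁻¹) Γ) := by
    intro z hz y hy
    obtain ⟨p, hp1, hp2⟩ := hfin.mem_toFinset.mp hz
    have hb : c⁻¹ • p ∈ B := by
      rw [dilate] at hp2
      exact (Set.mem_smul_set_iff_inv_smul_mem₀ hcpos.ne' _ _).mp hp2
    have hdistyp : dist y p ≤ 1 := by
      have h1 : dist y (fun i => (z i:ℝ)) ≤ 1/2 := le_of_lt (Metric.mem_ball.mp hy)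
      have h2 : dist p (fun i => (z i:ℝ)) ≤ 1/2 := hp1
      calc dist y p ≤ dist y (fun i => (z i:ℝ)) + dist p (fun i => (z i:ℝ)) :=
            dist_triangle_right _ _ _
        _ ≤ 1 := by linarith
    have hab : dist (c⁻¹ • y) (c⁻¹ • p) ≤ c⁻¹ := by
      rw [dist_smul₀, norm_inv, Real.norm_eq_abs, abs_of_pos hcpos]
      calc c⁻¹ * dist y p ≤ c⁻¹ * 1 :=
            mul_le_mul_of_nonneg_left hdistyp (by positivity)
        _ = c⁻¹ := mul_one _
    have hmem : c⁻¹ • y ∈ bdryNbhd (s + c⁻¹) Γ := by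
      have h1 : EMetric.infEdist (c⁻¹ • p) (frontier Γ) ≤ ENNReal.ofReal s := hsub hb
      show EMetric.infEdist (c⁻¹ • y) (frontier Γ) ≤ ENNReal.ofReal (s + c⁻¹)
      calc EMetric.infEdist (c⁻¹ • y) (frontier Γ)
          ≤ EMetric.infEdist (c⁻¹ • p) (frontier Γ) + edist (c⁻¹ • y) (c⁻¹ • p) :=
            EMetric.infEdist_le_infEdist_add_edist
        _ ≤ ENNReal.ofReal s + ENNReal.ofReal c⁻¹ := by
            apply add_le_add h1
            rw [edist_dist]
            exact ENNReal.ofReal_le_ofReal hab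
        _ = ENNReal.ofReal (s + c⁻¹) := (ENNReal.ofReal_add hs (by positivity)).symm
    rw [dilate, Set.mem_smul_set_iff_inv_smul_mem₀ hcpos.ne']
    exact hmem
  calc (nlat lam B : ℝ≥0∞)
      = ∑ z ∈ hfin.toFinset, volume (Metric.ball (fun i => (z i:ℝ)) (1/2)) := by
        simp [volume_unitBall, nlat, Set.ncard_eq_toFinset_card _ hfin]
    _ = volume (⋃ z ∈ hfin.toFinset, Metric.ball (fun i => (z i:ℝ)) (1/2)) := by
        rw [measure_biUnion_finset (fun z _ w _ hzw => lattice_balls_disjoint hzw)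
          (fun z _ => measurableSet_ball)]
    _ ≤ volume (dilate lam (bdryNbhd (s + c⁻¹) Γ)) :=
        measure_mono (Set.iUnion₂_subset key)
    _ = ENNReal.ofReal lam * volume (bdryNbhd (s + c⁻¹) Γ) := volume_dilate hd hlam _

theorem covering_count_boundary_region (d : ℕ) (hd : 1 ≤ d)
    (Γ : Set (Fin d → ℝ)) (hbdd : Bornology.IsBounded Γ) (hmeas : MeasurableSet Γ)
    (hpos : 0 < volume Γ)
    (hreg : ∃ C₀ r₀ : ℝ, 0 < C₀ ∧ 0 < r₀ ∧ ∀ r : ℝ, 0 < r → r ≤ r₀ →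
      (volume (bdryNbhd r Γ)).toReal ≤ C₀ * r)
    (α : ℝ) (hα : 0 < α) :
    ∃ C : ℝ, 0 < C ∧ ∃ lam₀ : ℝ, 1 < lam₀ ∧ ∀ lam : ℝ, lam₀ ≤ lam →
      lam * (volume (bdRegion (α * lam ^ (-(1 / (d : ℝ))) * Real.log lam) Γ)).toReal
          ≤ (nlat lam (bdRegion (α * lam ^ (-(1 / (d : ℝ))) * Real.log lam) Γ) : ℝ) ∧
      (nlat lam (bdRegion (α * lam ^ (-(1 / (d : ℝ))) * Real.log lam) Γ) : ℝ)
          - lam * (volume (bdRegion (α * lam ^ (-(1 / (d : ℝ))) * Real.log lam) Γ)).toReal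
        ≤ C * lam ^ (((d : ℝ) - 1) / d) * Real.log lam := by
  obtain ⟨C₀, r₀, hC₀, hr₀, hreg⟩ := hreg
  have hdpos : (0:ℝ) < (d:ℝ) := by exact_mod_cast hd
  have hdinv : (0:ℝ) < 1/(d:ℝ) := by positivity
  refine ⟨C₀ * (α + 1), by positivity, ?_⟩
  have htend1 : Tendsto (fun x : ℝ => Real.log x / x ^ (1/(d:ℝ))) atTop (nhds 0) :=
    (isLittleO_log_rpow_atTop hdinv).tendsto_div_nhds_zero
  have ev1 : ∀ᶠ x : ℝ in atTop, Real.log x / x ^ (1/(d:ℝ)) < r₀ / (2*α) :=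
    htend1.eventually_lt_const (by positivity)
  have ev2 : ∀ᶠ x : ℝ in atTop, x ^ (-(1/(d:ℝ))) < r₀/2 :=
    (tendsto_rpow_neg_atTop hdinv).eventually_lt_const (by positivity)
  have ev3 : ∀ᶠ x : ℝ in atTop, (1:ℝ) ≤ Real.log x :=
    Real.tendsto_log_atTop.eventually_ge_atTop 1
  obtain ⟨lam₀, hlam₀⟩ := Filter.eventually_atTop.mp ((ev1.and ev2).and ev3)
  refine ⟨max lam₀ 2, lt_of_lt_of_le one_lt_two (le_max_right _ _), ?_⟩
  intro lam hlam
  obtain ⟨⟨h1, h2⟩, h3⟩ := hlam₀ lam (le_trans (le_max_left _ _) hlam)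
  have hlam2 : 2 ≤ lam := le_trans (le_max_right _ _) hlam
  have hlampos : 0 < lam := by linarith
  set t := lam ^ (-(1/(d:ℝ))) with htdef
  set c := lam ^ (1/(d:ℝ)) with hcdef
  have hct : t = c⁻¹ := by rw [htdef, hcdef, Real.rpow_neg hlampos.le]
  have htpos : 0 < t := Real.rpow_pos_of_pos hlampos _
  have hcpos : 0 < c := Real.rpow_pos_of_pos hlampos _
  set s := α * t * Real.log lam with hsdef
  have hspos : 0 < s := by
    apply mul_pos (mul_pos hα htpos); linarith
  set B := bdRegion s Γ with hBdef
  have hBsub : B ⊆ Γ := Set.inter_subset_left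
  have hBbdd : Bornology.IsBounded B := hbdd.subset hBsub
  have hsr : s + t ≤ r₀ := by
    have hst : s ≤ r₀ / 2 := by
      have hts : t * Real.log lam = Real.log lam / c := by rw [hct]; ring
      rw [hsdef, mul_assoc, hts]
      calc α * (Real.log lam / c) ≤ α * (r₀/(2*α)) :=
            mul_le_mul_of_nonneg_left (le_of_lt h1) hα.le
        _ = r₀/2 := by field_simp
    linarith [le_of_lt h2]
  have hdne : d ≠ 0 := by omega
  have hlow := lower_bound hdne hlampos hBbdd
  have hlowR : lam * (volume B).toReal ≤ (nlat lam B : ℝ) := by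
    have := ENNReal.toReal_mono (ENNReal.natCast_ne_top _) hlow
    rw [ENNReal.toReal_mul, ENNReal.toReal_ofReal hlampos.le] at this
    simpa using this
  refine ⟨hlowR, ?_⟩
  have hBsub2 : B ⊆ bdryNbhd s Γ := Set.inter_subset_right
  have hup := upper_bound hdne hlampos hspos.le hBbdd hBsub2
  rw [← hcdef, ← hct] at hup
  have hfr : Bornology.IsBounded (bdryNbhd (s+t) Γ) := by
    rw [bdryNbhd_eq]
    exact ((hbdd.closure).subset frontier_subset_closure).cthickening
  have hvolfr : volume (bdryNbhd (s+t) Γ) ≤ ENNReal.ofReal (C₀ * (s+t)) := by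
    have h5 := hreg (s+t) (by linarith) hsr
    rw [← ENNReal.ofReal_toReal (vol_lt_top hfr).ne]
    exact ENNReal.ofReal_le_ofReal h5
  have hupR : (nlat lam B : ℝ) ≤ lam * (C₀ * (s+t)) := by
    have h6 : (nlat lam B : ℝ≥0∞) ≤ ENNReal.ofReal (lam * (C₀ * (s+t))) := by
      calc (nlat lam B : ℝ≥0∞) ≤ ENNReal.ofReal lam * volume (bdryNbhd (s+t) Γ) := hup
        _ ≤ ENNReal.ofReal lam * ENNReal.ofReal (C₀*(s+t)) := mul_le_mul_right hvolfr _
        _ = ENNReal.ofReal (lam * (C₀*(s+t))) := (ENNReal.ofReal_mul hlampos.le).symm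
    have := ENNReal.toReal_mono ENNReal.ofReal_ne_top h6
    rw [ENNReal.toReal_ofReal (by positivity : (0:ℝ) ≤ lam * (C₀ * (s+t)))] at this
    simpa using this
  have hL : lam * t = lam ^ (((d:ℝ)-1)/d) := by
    have h7 : lam * t = lam ^ (1 + -(1/(d:ℝ))) := by
      rw [Real.rpow_add hlampos, Real.rpow_one, htdef]
    rw [h7]
    congr 1
    field_simp
    ring
  have hfinal : lam * (C₀ * (s+t)) ≤ C₀*(α+1) * lam ^ (((d:ℝ)-1)/d) * Real.log lam := by
    rw [← hL, hsdef]
    nlinarith [mul_nonneg (mul_nonneg hC₀.le (mul_pos hlampos htpos).le)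
      (sub_nonneg.mpr h3), htpos, hlampos, hC₀, hα]
  have hnn : 0 ≤ lam * (volume B).toReal := by positivity
  linarith
end
end

section
/- Let Γ be a bounded Borel subset of ℝ^d with |Γ| > 0 such that |∂_r(Γ)| = O(r) as r ↓ 0. Then m_λ(Γ) − λ|Γ| = O(λ^{(d−1)/d}) as λ → ∞; that is, there exist constants C ∈ (0,∞) and λ_0 ≥ 1 such that for all λ ≥ λ_0, |m_λ(Γ) − λ|Γ|| ≤ C λ^{(d−1)/d}. -/
open MeasureTheory Metric Set Pointwise

noncomputable section

/-- `W_λ(B)`: the lattice points whose unit cube is contained in `λ^{1/d} B`. -/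
def Wlat {d : ℕ} (lam : ℝ) (B : Set (Fin d → ℝ)) : Set (Fin d → ℤ) :=
  {w | unitCube (fun i => (w i : ℝ)) ⊆ dilate lam B}

/-- `m_λ(B)`: the number of cubes in the packing of `λ^{1/d} B`. -/
def mlat {d : ℕ} (lam : ℝ) (B : Set (Fin d → ℝ)) : ℕ :=
  (Wlat lam B).ncard

open scoped ENNReal NNReal
-- crossing lemma
lemma cross {E : Type*} [TopologicalSpace E] {s t : Set E} (ht : IsPreconnected t)
    (h1 : (t ∩ s).Nonempty) (h2 : (t \ s).Nonempty) : (t ∩ frontier s).Nonempty := by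
  by_contra h
  rw [Set.not_nonempty_iff_eq_empty] at h
  have hfr : ∀ y ∈ t, y ∉ frontier s := fun y hy hf =>
    (Set.eq_empty_iff_forall_notMem.mp h y) ⟨hy, hf⟩
  obtain ⟨p, hpt, hps⟩ := h1
  obtain ⟨q, hqt, hqs⟩ := h2
  have hsub : t ⊆ interior s ∪ (closure s)ᶜ := by
    intro y hy
    by_cases hc : y ∈ closure s
    · left
      by_contra hi
      exact hfr y hy ⟨hc, hi⟩
    · right; exact hc
  have hp : p ∈ interior s := by
    by_contra hi
    exact hfr p hpt ⟨subset_closure hps, hi⟩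
  have hq : q ∈ (closure s)ᶜ := by
    intro hc
    exact hfr q hqt ⟨hc, fun hi => hqs (interior_subset hi)⟩
  obtain ⟨r, -, hri, hrc⟩ := ht (interior s) ((closure s)ᶜ) isOpen_interior
    isClosed_closure.isOpen_compl hsub ⟨p, hpt, hp⟩ ⟨q, hqt, hq⟩
  exact hrc (subset_closure (interior_subset hri))

-- smul frontier
lemma smul_frontier0 {E : Type*} [NormedAddCommGroup E] [NormedSpace ℝ E] {c : ℝ} (hc : c ≠ 0)
    (S : Set E) : frontier (c • S) = c • frontier S := by
  unfold frontier
  rw [closure_smul₀' hc S, interior_smul₀ hc, ← Set.image_smul, ← Set.image_smul, ← Set.image_smul,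
    ← Set.image_diff (smul_right_injective E hc)]

lemma bdry_smul {d : ℕ} {t : ℝ} (ht : 0 < t) (Γ : Set (Fin d → ℝ)) :
    bdryNbhd 1 (t • Γ) = t • bdryNbhd (1/t) Γ := by
  ext x
  rw [Set.mem_smul_set_iff_inv_smul_mem₀ ht.ne']
  unfold bdryNbhd
  simp only [Set.mem_setOf_eq]
  rw [smul_frontier0 ht.ne' Γ]
  have hx : x = t • (t⁻¹ • x) := (smul_inv_smul₀ ht.ne' x).symm
  rw [show EMetric.infEdist x (t • frontier Γ) =
      EMetric.infEdist (t • (t⁻¹ • x)) (t • frontier Γ) by rw [← hx]]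
  unfold EMetric.infEdist
  rw [infEDist_smul₀ ht.ne']
  rw [ENNReal.smul_def, smul_eq_mul, ← enorm_eq_nnnorm, Real.enorm_eq_ofReal ht.le]
  rw [ENNReal.mul_le_iff_le_inv (by simp [ht]) ENNReal.ofReal_ne_top]
  rw [ENNReal.ofReal_one, mul_one, one_div, ENNReal.ofReal_inv_of_pos ht]

lemma cube_subset {d : ℕ} {D : Set (Fin d → ℝ)} {x : Fin d → ℝ} (hx : x ∈ D)
    (hx' : x ∉ bdryNbhd 1 D) :
    Metric.closedBall (fun i => ((round (x i) : ℤ) : ℝ)) (1/2) ⊆ D := by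
  have hball : Metric.closedBall x 1 ⊆ D := by
    intro z hz
    by_contra hzD
    obtain ⟨y, hyseg, hyfr⟩ := cross (convex_segment x z).isPreconnected
      ⟨x, left_mem_segment ℝ x z, hx⟩ ⟨z, right_mem_segment ℝ x z, hzD⟩
    apply hx'
    have h1 : dist x y ≤ dist x z := by
      have := dist_add_dist_of_mem_segment hyseg
      nlinarith [dist_nonneg (x := y) (y := z)]
    have h2 : dist x z ≤ 1 := by
      rw [dist_comm]; exact Metric.mem_closedBall.mp hz
    show EMetric.infEdist x (frontier D) ≤ ENNReal.ofReal 1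
    calc EMetric.infEdist x (frontier D) ≤ edist x y := EMetric.infEdist_le_edist_of_mem hyfr
      _ = ENNReal.ofReal (dist x y) := edist_dist x y
      _ ≤ ENNReal.ofReal 1 := ENNReal.ofReal_le_ofReal (h1.trans h2)
  refine subset_trans ?_ hball
  apply Metric.closedBall_subset_closedBall'
  have : dist (fun i => ((round (x i) : ℤ) : ℝ)) x ≤ 1/2 := by
    rw [dist_pi_le_iff (by norm_num : (0:ℝ) ≤ 1/2)]
    intro i
    rw [Real.dist_eq, abs_sub_comm]
    exact abs_sub_round (x i)
  linarith

lemma lattice_finite {d : ℕ} {D : Set (Fin d → ℝ)} (hD : Bornology.IsBounded D) :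
    {w : Fin d → ℤ | (fun i => ((w i : ℤ) : ℝ)) ∈ D}.Finite := by
  obtain ⟨R, hR⟩ := hD.subset_closedBall 0
  apply Set.Finite.subset (Finset.Icc (fun _ : Fin d => -⌈R⌉) (fun _ => ⌈R⌉)).finite_toSet
  intro w hw
  simp only [Set.mem_setOf_eq] at hw
  have habs : ∀ i, |((w i : ℤ) : ℝ)| ≤ R := by
    intro i
    have h1 := (dist_le_pi_dist (fun i => ((w i : ℤ) : ℝ)) 0 i).trans
      (Metric.mem_closedBall.mp (hR hw))
    simpa [Real.dist_eq] using h1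
  simp only [Finset.coe_Icc, Set.mem_Icc, Pi.le_def]
  constructor <;> intro i
  · have : (-(⌈R⌉:ℝ)) ≤ ((w i : ℤ) : ℝ) := by
      have := (abs_le.mp (habs i)).1
      have h2 := Int.le_ceil R
      linarith
    exact_mod_cast this
  · have : ((w i : ℤ) : ℝ) ≤ (⌈R⌉ : ℝ) := ((abs_le.mp (habs i)).2).trans (Int.le_ceil R)
    exact_mod_cast this

lemma count_key {d : ℕ} {D : Set (Fin d → ℝ)} (hD : Bornology.IsBounded D) :
    ((Set.ncard {w : Fin d → ℤ | Metric.closedBall (fun i => ((w i : ℤ) : ℝ)) (1/2) ⊆ D} : ℕ) : ℝ≥0∞)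
      ≤ volume D ∧
    volume D ≤ (Set.ncard {w : Fin d → ℤ | Metric.closedBall (fun i => ((w i : ℤ) : ℝ)) (1/2) ⊆ D} : ℕ)
      + volume (bdryNbhd 1 D) := by
  set cw : (Fin d → ℤ) → (Fin d → ℝ) := fun w i => ((w i : ℤ) : ℝ) with hcw
  set W : Set (Fin d → ℤ) := {w | Metric.closedBall (cw w) (1/2) ⊆ D} with hW
  have hWfin : W.Finite := by
    apply (lattice_finite hD).subset
    intro w hw
    exact hw (Metric.mem_closedBall_self (by norm_num))
  set F : Finset (Fin d → ℤ) := hWfin.toFinset with hF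
  have hncard : W.ncard = F.card := Set.ncard_eq_toFinset_card _ hWfin
  have hvol_ball : ∀ w : Fin d → ℤ, volume (Metric.ball (cw w) (1/2 : ℝ)) = 1 := by
    intro w
    rw [Real.volume_pi_ball _ (by norm_num : (0:ℝ) < 1/2)]
    norm_num
  have hvol_cball : ∀ w : Fin d → ℤ, volume (Metric.closedBall (cw w) (1/2 : ℝ)) = 1 := by
    intro w
    rw [Real.volume_pi_closedBall _ (by norm_num : (0:ℝ) ≤ 1/2)]
    norm_num
  have hdisj : (↑F : Set (Fin d → ℤ)).PairwiseDisjoint (fun w => Metric.ball (cw w) (1/2 : ℝ)) := by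
    intro a _ b _ hab
    apply Set.disjoint_left.mpr
    intro z hza hzb
    obtain ⟨i, hi⟩ := Function.ne_iff.mp hab
    have h1 : (1 : ℝ) ≤ |cw a i - cw b i| := by
      have : (1 : ℤ) ≤ |a i - b i| := Int.one_le_abs (sub_ne_zero.mpr hi)
      have : (1 : ℝ) ≤ |((a i - b i : ℤ) : ℝ)| := by exact_mod_cast this
      simpa [hcw] using this
    have h2 : dist (cw a i) (cw b i) ≤ dist (cw a) (cw b) := dist_le_pi_dist (cw a) (cw b) i
    have h3 : dist (cw a) (cw b) ≤ dist (cw a) z + dist z (cw b) := dist_triangle _ _ _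
    have h4 : dist (cw a) z < 1/2 := by rw [dist_comm]; exact Metric.mem_ball.mp hza
    have h5 : dist z (cw b) < 1/2 := Metric.mem_ball.mp hzb
    rw [Real.dist_eq] at h2
    linarith
  constructor
  · have hsum : ∑ w ∈ F, volume (Metric.ball (cw w) (1/2 : ℝ))
        = volume (⋃ w ∈ F, Metric.ball (cw w) (1/2 : ℝ)) :=
      (measure_biUnion_finset hdisj (fun _ _ => measurableSet_ball)).symm
    have hsub : (⋃ w ∈ F, Metric.ball (cw w) (1/2 : ℝ)) ⊆ D := by
      refine Set.iUnion₂_subset fun w hw => ?_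
      exact (Metric.ball_subset_closedBall).trans (hWfin.mem_toFinset.mp hw)
    calc ((W.ncard : ℕ) : ℝ≥0∞) = (F.card : ℝ≥0∞) := by rw [hncard]
      _ = ∑ w ∈ F, volume (Metric.ball (cw w) (1/2 : ℝ)) := by simp [hvol_ball]
      _ = volume (⋃ w ∈ F, Metric.ball (cw w) (1/2 : ℝ)) := hsum
      _ ≤ volume D := measure_mono hsub
  · have hcover : D ⊆ (⋃ w ∈ F, Metric.closedBall (cw w) (1/2 : ℝ)) ∪ bdryNbhd 1 D := by
      intro x hxD
      by_cases hb : x ∈ bdryNbhd 1 D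
      · exact Set.mem_union_right _ hb
      · left
        have hsub := cube_subset hxD hb
        have hwW : (fun i => round (x i)) ∈ W := hsub
        refine Set.mem_biUnion (hWfin.mem_toFinset.mpr hwW) ?_
        rw [Metric.mem_closedBall, dist_pi_le_iff (by norm_num : (0:ℝ) ≤ 1/2)]
        intro i
        rw [Real.dist_eq]
        exact abs_sub_round (x i)
    calc volume D ≤ volume ((⋃ w ∈ F, Metric.closedBall (cw w) (1/2 : ℝ)) ∪ bdryNbhd 1 D) :=
          measure_mono hcover
      _ ≤ volume (⋃ w ∈ F, Metric.closedBall (cw w) (1/2 : ℝ)) + volume (bdryNbhd 1 D) :=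
          measure_union_le _ _
      _ ≤ (∑ w ∈ F, volume (Metric.closedBall (cw w) (1/2 : ℝ))) + volume (bdryNbhd 1 D) := by
          gcongr
          exact measure_biUnion_finset_le F _
      _ = (W.ncard : ℝ≥0∞) + volume (bdryNbhd 1 D) := by simp [hvol_cball, hncard]

theorem packing_count_asymptotics (d : ℕ) (hd : 1 ≤ d)
    (Γ : Set (Fin d → ℝ)) (hbdd : Bornology.IsBounded Γ) (hmeas : MeasurableSet Γ)
    (hpos : 0 < volume Γ)
    (hreg : ∃ C₀ r₀ : ℝ, 0 < C₀ ∧ 0 < r₀ ∧ ∀ r : ℝ, 0 < r → r ≤ r₀ →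
      (volume (bdryNbhd r Γ)).toReal ≤ C₀ * r) :
    ∃ C : ℝ, 0 < C ∧ ∃ lam₀ : ℝ, 1 ≤ lam₀ ∧ ∀ lam : ℝ, lam₀ ≤ lam →
      |(mlat lam Γ : ℝ) - lam * (volume Γ).toReal| ≤ C * lam ^ (((d : ℝ) - 1) / d) := by
  obtain ⟨C₀, r₀, hC₀, hr₀, hreg'⟩ := hreg
  set s : ℝ := max 1 (1/r₀) with hs
  have hs1 : (1:ℝ) ≤ s := le_max_left _ _
  have hs0 : (0:ℝ) < s := lt_of_lt_of_le one_pos hs1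
  refine ⟨C₀, hC₀, s ^ (d:ℕ), one_le_pow₀ hs1, ?_⟩
  intro lam hlam
  have hlam1 : (1:ℝ) ≤ lam := le_trans (one_le_pow₀ hs1) hlam
  have hlam0 : (0:ℝ) < lam := lt_of_lt_of_le one_pos hlam1
  set t : ℝ := lam ^ (1/(d:ℝ)) with htdef
  have hdne : (d:ℝ) ≠ 0 := by
    have : (0:ℝ) < d := by exact_mod_cast hd
    exact this.ne'
  have hts : s ≤ t := by
    have hse : s = (s ^ (d:ℕ) : ℝ) ^ (1/(d:ℝ)) := by
      rw [← Real.rpow_natCast s d, ← Real.rpow_mul hs0.le, mul_one_div, div_self hdne,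
        Real.rpow_one]
    rw [hse, htdef]
    exact Real.rpow_le_rpow (by positivity) hlam (by positivity)
  have ht1 : (1:ℝ) ≤ t := le_trans hs1 hts
  have ht0 : (0:ℝ) < t := lt_of_lt_of_le one_pos ht1
  have htr : 1/t ≤ r₀ := by
    have h1 : 1/r₀ ≤ t := le_trans (le_max_right 1 (1/r₀)) hts
    rw [div_le_iff₀ ht0]
    have h2 := mul_le_mul_of_nonneg_left h1 hr₀.le
    rw [mul_one_div, div_self hr₀.ne'] at h2
    linarith
  have htd : t ^ (d:ℕ) = lam := by
    rw [htdef, ← Real.rpow_natCast (lam ^ (1/(d:ℝ))) d, ← Real.rpow_mul hlam0.le,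
      one_div, inv_mul_cancel₀ hdne, Real.rpow_one]
  set D : Set (Fin d → ℝ) := t • Γ with hD
  have hDbdd : Bornology.IsBounded D := hbdd.smul₀ t
  have hfinrank : ENNReal.ofReal (t ^ Module.finrank ℝ (Fin d → ℝ)) = ENNReal.ofReal lam := by
    rw [Module.finrank_fintype_fun_eq_card, Fintype.card_fin, htd]
  have hvolD : volume D = ENNReal.ofReal lam * volume Γ := by
    rw [hD, MeasureTheory.Measure.addHaar_smul_of_nonneg volume ht0.le Γ, hfinrank]
  have hcount := count_key hDbdd
  have hMdef : (mlat lam Γ : ℝ≥0∞) =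
      ((Set.ncard {w : Fin d → ℤ | Metric.closedBall (fun i => ((w i : ℤ) : ℝ)) (1/2) ⊆ D}
        : ℕ) : ℝ≥0∞) := rfl
  obtain ⟨hlow, hup⟩ := hcount
  rw [← hMdef] at hlow hup
  have hΓfin : volume Γ ≠ ⊤ := hbdd.measure_lt_top.ne
  have hVfin : volume D ≠ ⊤ := hDbdd.measure_lt_top.ne
  have hbdryΓ_bdd : Bornology.IsBounded (bdryNbhd (1/t) Γ) := by
    have hfb : Bornology.IsBounded (frontier Γ) := hbdd.closure.subset frontier_subset_closure
    exact hfb.cthickening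
  have hbdry_fin : volume (bdryNbhd (1/t) Γ) ≠ ⊤ := hbdryΓ_bdd.measure_lt_top.ne
  have hbdry_le : volume (bdryNbhd (1/t) Γ) ≤ ENNReal.ofReal (C₀ * (1/t)) := by
    rw [ENNReal.le_ofReal_iff_toReal_le hbdry_fin (by positivity)]
    exact hreg' (1/t) (by positivity) htr
  have hB : volume (bdryNbhd 1 D) ≤ ENNReal.ofReal (lam * (C₀ * (1/t))) := by
    rw [hD, bdry_smul ht0 Γ, MeasureTheory.Measure.addHaar_smul_of_nonneg volume ht0.le,
      hfinrank, ENNReal.ofReal_mul hlam0.le]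
    exact mul_le_mul_right hbdry_le _
  have hVr : (volume D).toReal = lam * (volume Γ).toReal := by
    rw [hvolD, ENNReal.toReal_mul, ENNReal.toReal_ofReal hlam0.le]
  have hBfin : volume (bdryNbhd 1 D) ≠ ⊤ := (hB.trans_lt ENNReal.ofReal_lt_top).ne
  have h1r : ((mlat lam Γ : ℕ) : ℝ) ≤ lam * (volume Γ).toReal := by
    rw [← hVr]
    have h := ENNReal.toReal_mono hVfin hlow
    simpa using h
  have hBr : (volume (bdryNbhd 1 D)).toReal ≤ lam * (C₀ * (1/t)) :=
    ENNReal.toReal_le_of_le_ofReal (by positivity) hB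
  have h2r : lam * (volume Γ).toReal ≤ ((mlat lam Γ : ℕ) : ℝ)
      + (volume (bdryNbhd 1 D)).toReal := by
    rw [← hVr]
    have hne : ((mlat lam Γ : ℕ) : ℝ≥0∞) + volume (bdryNbhd 1 D) ≠ ⊤ :=
      ENNReal.add_ne_top.mpr ⟨by simp, hBfin⟩
    have h := ENNReal.toReal_mono hne hup
    rwa [ENNReal.toReal_add (by simp) hBfin, ENNReal.toReal_natCast] at h
  have hpow : lam ^ (((d:ℝ)-1)/d) = lam / t := by
    have hexp : ((d:ℝ)-1)/d = 1 - 1/d := by field_simp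
    rw [hexp, Real.rpow_sub hlam0, Real.rpow_one, htdef]
  have heq : lam * (C₀ * (1/t)) = C₀ * lam ^ (((d:ℝ)-1)/d) := by
    rw [hpow]; field_simp
  rw [abs_sub_le_iff]
  constructor
  · have h0 : (0:ℝ) ≤ C₀ * lam ^ (((d:ℝ)-1)/d) := by positivity
    linarith
  · linarith [heq ▸ (by linarith : lam * (volume Γ).toReal - ((mlat lam Γ : ℕ) : ℝ)
      ≤ lam * (C₀ * (1/t)))]
end
end

section
/- Let Γ ⊆ ℝ^d be a set with nonempty topological boundary ∂Γ, and let r, s > 0. Then ∂_r(Γ ∩ ∂_s(Γ)) ⊆ ∂_{r+s}(Γ); that is, every point x ∈ ℝ^d with d_∞(x, ∂(Γ ∩ ∂_s(Γ))) ≤ r satisfies d_∞(x, ∂Γ) ≤ r + s. -/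
open MeasureTheory Metric Set

noncomputable section

theorem bdryNbhd_inter_bdryNbhd_subset (d : ℕ) (Γ : Set (Fin d → ℝ))
    (hfr : (frontier Γ).Nonempty) (r s : ℝ) (hr : 0 < r) (hs : 0 < s) :
    bdryNbhd r (Γ ∩ bdryNbhd s Γ) ⊆ bdryNbhd (r + s) Γ := by
  intro x hx
  have hNs_closed : IsClosed (bdryNbhd s Γ) :=
    isClosed_le EMetric.continuous_infEdist continuous_const
  have hF : frontier (Γ ∩ bdryNbhd s Γ) ⊆ bdryNbhd s Γ := by
    intro y hy
    rcases frontier_inter_subset Γ (bdryNbhd s Γ) hy with h | h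
    · have h0 : EMetric.infEdist y (frontier Γ) = 0 := EMetric.infEdist_zero_of_mem h.1
      simp [bdryNbhd, h0]
    · exact hNs_closed.frontier_subset h.2
  simp only [bdryNbhd, mem_setOf_eq] at hx ⊢
  refine ENNReal.le_of_forall_pos_le_add fun ε hε _ => ?_
  have hlt : EMetric.infEdist x (frontier (Γ ∩ bdryNbhd s Γ)) < ENNReal.ofReal r + ε :=
    lt_of_le_of_lt hx (ENNReal.lt_add_right (by simp) (by simpa using hε.ne'))
  obtain ⟨y, hyF, hy⟩ := EMetric.infEdist_lt_iff.mp hlt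
  have h1 : EMetric.infEdist x (frontier Γ) ≤ edist x y + EMetric.infEdist y (frontier Γ) :=
    EMetric.infEdist_le_edist_add_infEdist
  have h2 : EMetric.infEdist y (frontier Γ) ≤ ENNReal.ofReal s := hF hyF
  calc EMetric.infEdist x (frontier Γ)
      ≤ edist x y + EMetric.infEdist y (frontier Γ) := h1
    _ ≤ (ENNReal.ofReal r + ε) + ENNReal.ofReal s := add_le_add hy.le h2
    _ = ENNReal.ofReal (r + s) + ε := by
        rw [ENNReal.ofReal_add hr.le hs.le]; ring
end
end

section
/- Let k be an even positive integer. There exists a constant C ∈ (0,∞) depending only on k such that the following holds. Let V be a finite index set of cardinality n, let (Ȳ_z)_{z∈V} be real random variables on a common probability space with E[Ȳ_z] = 0 and E[|Ȳ_z|^k] ≤ M^k for all z ∈ V (for some M < ∞), and let ~ be a symmetric relation on V such that for each z ∈ V, card{w ∈ V : w ≠ z, w ~ z} ≤ D, and such that for every z ∈ V, Ȳ_z is independent of the family (Ȳ_w : w ∈ V, w ≠ z, w ≁ z). Then E[(∑_{z∈V} Ȳ_z)^k] ≤ C M^k n^{k/2} (D + 1)^{k/2}. -/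
open MeasureTheory ProbabilityTheory

/-- AM-GM-ish: a product of at most `k` nonnegative reals is at most `1` plus the sum
of their `k`-th powers. -/
lemma aux_prod_le_one_add_sum {ι : Type*} (s : Finset ι) (a : ι → ℝ)
    (ha : ∀ i, 0 ≤ a i) (k : ℕ) (hs : s.card ≤ k) :
    ∏ i ∈ s, a i ≤ 1 + ∑ i ∈ s, a i ^ k := by
  rcases s.eq_empty_or_nonempty with rfl | hne
  · simp
  · obtain ⟨j, hj, hmax⟩ := s.exists_max_image a hne
    have h1 : ∏ i ∈ s, a i ≤ a j ^ s.card := by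
      calc ∏ i ∈ s, a i ≤ ∏ _i ∈ s, a j :=
            Finset.prod_le_prod (fun i _ => ha i) (fun i hi => hmax i hi)
        _ = a j ^ s.card := by rw [Finset.prod_const]
    have h2 : a j ^ s.card ≤ 1 + a j ^ k := by
      rcases le_or_gt (a j) 1 with h | h
      · have := pow_le_one₀ (ha j) h (n := s.card)
        have hk0 : (0:ℝ) ≤ a j ^ k := pow_nonneg (ha j) k
        linarith
      · have h1le : (1:ℝ) ≤ a j := le_of_lt h
        have := pow_le_pow_right₀ h1le hs
        have hk0 : (0:ℝ) ≤ a j ^ s.card := pow_nonneg (ha j) _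
        linarith
    have h3 : a j ^ k ≤ ∑ i ∈ s, a i ^ k :=
      Finset.single_le_sum (fun i _ => pow_nonneg (ha i) k) hj
    linarith

/-- A product of exactly `k` nonnegative reals is at most the sum of their `k`-th powers. -/
lemma aux_prod_le_sum_pow {ι : Type*} (s : Finset ι) (a : ι → ℝ)
    (ha : ∀ i, 0 ≤ a i) (k : ℕ) (hs : s.card = k) (hne : s.Nonempty) :
    ∏ i ∈ s, a i ≤ ∑ i ∈ s, a i ^ k := by
  obtain ⟨j, hj, hmax⟩ := s.exists_max_image a hne
  calc ∏ i ∈ s, a i ≤ ∏ _i ∈ s, a j :=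
        Finset.prod_le_prod (fun i _ => ha i) (fun i hi => hmax i hi)
    _ = a j ^ k := by rw [Finset.prod_const, hs]
    _ ≤ ∑ i ∈ s, a i ^ k :=
        Finset.single_le_sum (fun i _ => pow_nonneg (ha i) k) hj

/-- exponent bookkeeping for the one-vertex removal step. -/
lemma aux_pow_step (n m : ℕ) (hmn : m ≤ n) (s' : ℕ) :
    m * (n ^ (s' / 2) * m ^ (s' - s' / 2)) ≤
      n ^ ((s' + 1) / 2) * m ^ ((s' + 1) - (s' + 1) / 2) := by
  rcases Nat.even_or_odd s' with h | h
  · obtain ⟨q, rfl⟩ := h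
    have e1 : (q + q) / 2 = q := by omega
    have e2 : (q + q) - q = q := by omega
    have e3 : (q + q + 1) / 2 = q := by omega
    have e4 : (q + q + 1) - q = q + 1 := by omega
    rw [e1, e3, e2, e4]
    apply le_of_eq
    ring
  · obtain ⟨q, rfl⟩ := h
    have e1 : (2 * q + 1) / 2 = q := by omega
    have e2 : (2 * q + 1) - q = q + 1 := by omega
    have e3 : (2 * q + 1 + 1) / 2 = q + 1 := by omega
    have e4 : (2 * q + 1 + 1) - (q + 1) = q + 1 := by omega
    rw [e1, e2, e3, e4]
    calc m * (n ^ q * m ^ (q + 1)) = (n ^ q * m ^ (q + 1)) * m := by ring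
      _ ≤ (n ^ q * m ^ (q + 1)) * n := Nat.mul_le_mul_left _ hmn
      _ = n ^ (q + 1) * m ^ (q + 1) := by ring

/-- exponent bookkeeping for the two-vertex removal step. -/
lemma aux_pow_step2 (n m : ℕ) (s'' : ℕ) :
    m * (n * (n ^ (s'' / 2) * m ^ (s'' - s'' / 2))) ≤
      n ^ ((s'' + 2) / 2) * m ^ ((s'' + 2) - (s'' + 2) / 2) := by
  have e1 : (s'' + 2) / 2 = s'' / 2 + 1 := by omega
  have e2 : (s'' + 2) - (s'' + 2) / 2 = (s'' - s'' / 2) + 1 := by omega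
  rw [e2, e1]
  apply le_of_eq
  ring

/-- A filter of `univ` with a fixed classical decidability instance, to avoid
decidability-instance mismatches across lemmas. -/
noncomputable def auxFilter {α : Type*} [Fintype α] (p : α → Prop) : Finset α :=
  @Finset.filter α p (Classical.decPred p) Finset.univ

lemma mem_auxFilter {α : Type*} [Fintype α] {p : α → Prop} {a : α} :
    a ∈ auxFilter p ↔ p a := by
  letI : DecidablePred p := Classical.decPred p
  show a ∈ Finset.univ.filter p ↔ p a
  rw [Finset.mem_filter]
  simp

lemma auxFilter_card_le {α : Type*} [Fintype α] (p : α → Prop) :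
    (auxFilter p).card ≤ Fintype.card α := by
  have h : auxFilter p ⊆ Finset.univ :=
    @Finset.filter_subset α p (Classical.decPred p) Finset.univ
  calc (auxFilter p).card ≤ (Finset.univ : Finset α).card := Finset.card_le_card h
    _ = Fintype.card α := Finset.card_univ

lemma auxFilter_card_mono {α : Type*} [Fintype α] {p q : α → Prop}
    (h : ∀ a, p a → q a) : (auxFilter p).card ≤ (auxFilter q).card := by
  apply Finset.card_le_card
  intro a ha
  exact mem_auxFilter.mpr (h a (mem_auxFilter.mp ha))

section Counting

variable {ι V : Type*} [Fintype ι] [Fintype V]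

/-- Key counting step: integrating out one constrained coordinate. -/
lemma aux_step_count [DecidableEq ι] [DecidableEq V]
    (N : V → V → Prop) (m : ℕ)
    (hm : ∀ w, (auxFilter (fun v => N w v)).card ≤ m)
    (σ : ι → ι) (S : Finset ι) (j : ι) (hj : j ∈ S) (hjj : σ j ≠ j)
    (hpre : ∀ i ∈ S, σ i ≠ j) :
    (auxFilter (fun f : ι → V => ∀ i ∈ S, N (f (σ i)) (f i))).card * Fintype.card V
      ≤ m * (auxFilter (fun f : ι → V => ∀ i ∈ S.erase j, N (f (σ i)) (f i))).card := by
  classical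
  set A := (auxFilter (fun f : ι → V => ∀ i ∈ S, N (f (σ i)) (f i))) ×ˢ
      (Finset.univ : Finset V) with hA
  set B := (auxFilter (fun g : ι → V => ∀ i ∈ S.erase j, N (g (σ i)) (g i))).biUnion
      (fun g => {g} ×ˢ (auxFilter (fun v => N (g (σ j)) v))) with hB
  have hcardA : A.card = (auxFilter
      (fun f : ι → V => ∀ i ∈ S, N (f (σ i)) (f i))).card * Fintype.card V := by
    rw [hA, Finset.card_product, Finset.card_univ]
  have hinj : Set.InjOn (fun p : (ι → V) × V => (Function.update p.1 j p.2, p.1 j)) A := by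
    intro p hp q hq hpq
    obtain ⟨h1, h2⟩ := Prod.mk.injEq _ _ _ _ ▸ hpq
    have hv : p.2 = q.2 := by
      have := congrArg (fun f => f j) h1
      simpa [Function.update_self] using this
    have hf : p.1 = q.1 := by
      funext i
      by_cases hij : i = j
      · subst hij; exact h2
      · have := congrArg (fun f => f i) h1
        simpa [Function.update_of_ne hij] using this
    exact Prod.ext hf hv
  have hmaps : ∀ p ∈ A, (Function.update p.1 j p.2, p.1 j) ∈ B := by
    rintro ⟨f, v⟩ hp
    rw [hA, Finset.mem_product] at hp
    have hfS := mem_auxFilter.mp hp.1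
    rw [hB, Finset.mem_biUnion]
    refine ⟨Function.update f j v, ?_, ?_⟩
    · refine mem_auxFilter.mpr (fun i hi => ?_)
      have hiS := Finset.mem_of_mem_erase hi
      have hinej : i ≠ j := Finset.ne_of_mem_erase hi
      rw [Function.update_of_ne (hpre i hiS), Function.update_of_ne hinej]
      exact hfS i hiS
    · rw [Finset.mem_product, Finset.mem_singleton]
      refine ⟨rfl, mem_auxFilter.mpr ?_⟩
      rw [Function.update_of_ne hjj]
      exact hfS j hj
  have hAB : A.card ≤ B.card := Finset.card_le_card_of_injOn _ hmaps hinj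
  have hcardB : B.card ≤ (auxFilter
      (fun g : ι → V => ∀ i ∈ S.erase j, N (g (σ i)) (g i))).card * m := by
    rw [hB]
    calc _ ≤ ∑ g ∈ (auxFilter
          (fun g : ι → V => ∀ i ∈ S.erase j, N (g (σ i)) (g i))),
          ({g} ×ˢ (auxFilter (fun v => N (g (σ j)) v))).card :=
        Finset.card_biUnion_le
      _ ≤ ∑ _g ∈ (auxFilter
          (fun g : ι → V => ∀ i ∈ S.erase j, N (g (σ i)) (g i))), m := by
          refine Finset.sum_le_sum (fun g _ => ?_)
          rw [Finset.card_product, Finset.card_singleton, one_mul]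
          exact hm _
      _ = _ := by rw [Finset.sum_const, smul_eq_mul]
  calc (auxFilter (fun f : ι → V => ∀ i ∈ S, N (f (σ i)) (f i))).card *
        Fintype.card V = A.card := hcardA.symm
    _ ≤ B.card := hAB
    _ ≤ _ := hcardB
    _ = _ := mul_comm _ _

/-- Main counting lemma: the number of constrained functions, via repeatedly removing
constrained coordinates. -/
lemma aux_count_le [DecidableEq ι] [DecidableEq V]
    (N : V → V → Prop) (m : ℕ)
    (hm : ∀ w, (auxFilter (fun v => N w v)).card ≤ m)
    (hmn : m ≤ Fintype.card V) (σ : ι → ι) (S : Finset ι) :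
    (∀ j ∈ S, σ j ≠ j) →
    (auxFilter (fun f : ι → V => ∀ i ∈ S, N (f (σ i)) (f i))).card *
        (Fintype.card V) ^ S.card
      ≤ (Fintype.card V) ^ (Fintype.card ι) *
          ((Fintype.card V) ^ (S.card / 2) * m ^ (S.card - S.card / 2)) := by
  classical
  induction S using Finset.strongInductionOn with
  | _ S IH =>
  intro hfix
  set n := Fintype.card V with hn
  rcases S.eq_empty_or_nonempty with rfl | hne
  · have huniv : auxFilter (fun f : ι → V =>
        ∀ i ∈ (∅ : Finset ι), N (f (σ i)) (f i)) = Finset.univ :=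
      Finset.eq_univ_of_forall (fun f => mem_auxFilter.mpr
        (fun i hi => absurd hi (Finset.notMem_empty i)))
    rw [huniv, Finset.card_univ, Fintype.card_fun]
    simp [hn]
  by_cases hcaseA : ∃ j ∈ S, ∀ i ∈ S, σ i = j → i = j
  · -- Case A : some j has no preimage in S other than itself
    obtain ⟨j, hjS, huniq⟩ := hcaseA
    have hpre : ∀ i ∈ S, σ i ≠ j := by
      intro i hi h
      have hij := huniq i hi h
      rw [hij] at h
      exact hfix j hjS h
    obtain ⟨s', hs'⟩ : ∃ s', (S.erase j).card = s' := ⟨_, rfl⟩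
    have hs : S.card = s' + 1 := by
      rw [← hs', Finset.card_erase_of_mem hjS,
        Nat.sub_add_cancel (Finset.card_pos.mpr hne)]
    have hstep := aux_step_count N m hm σ S j hjS (hfix j hjS) hpre
    have hIH := IH (S.erase j) (Finset.erase_ssubset hjS)
      (fun i hi => hfix i (Finset.mem_of_mem_erase hi))
    rw [hs'] at hIH
    rw [hs]
    calc (auxFilter (fun f : ι → V => ∀ i ∈ S, N (f (σ i)) (f i))).card *
          n ^ (s' + 1)
        = ((auxFilter (fun f : ι → V => ∀ i ∈ S, N (f (σ i)) (f i))).card * n) *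
          n ^ s' := by ring
      _ ≤ (m * (auxFilter
            (fun f : ι → V => ∀ i ∈ S.erase j, N (f (σ i)) (f i))).card) * n ^ s' :=
          Nat.mul_le_mul_right _ hstep
      _ = m * ((auxFilter
            (fun f : ι → V => ∀ i ∈ S.erase j, N (f (σ i)) (f i))).card * n ^ s') := by ring
      _ ≤ m * (n ^ (Fintype.card ι) * (n ^ (s' / 2) * m ^ (s' - s' / 2))) :=
          Nat.mul_le_mul_left _ hIH
      _ = n ^ (Fintype.card ι) * (m * (n ^ (s' / 2) * m ^ (s' - s' / 2))) := by ring
      _ ≤ n ^ (Fintype.card ι) *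
            (n ^ ((s' + 1) / 2) * m ^ ((s' + 1) - (s' + 1) / 2)) :=
          Nat.mul_le_mul_left _ (aux_pow_step n m hmn s')
  · -- Case B : every j in S has a preimage in S different from itself
    push_neg at hcaseA
    have hex : ∀ j ∈ S, ∃ i ∈ S, σ i = j ∧ i ≠ j := hcaseA
    have hF1 : ∀ j ∈ S, 1 ≤ (S.filter (fun i => σ i = j)).card := by
      intro j hj
      obtain ⟨i, hiS, hσ, -⟩ := hex j hj
      exact Finset.card_pos.mpr ⟨i, Finset.mem_filter.mpr ⟨hiS, hσ⟩⟩
    have hFeq : ∀ j ∈ S, S.filter (fun i => σ i = j) =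
        (S.filter (fun i => σ i ∈ S)).filter (fun i => σ i = j) := by
      intro j hj
      ext i
      simp only [Finset.mem_filter]
      constructor
      · rintro ⟨hiS, hσ⟩; exact ⟨⟨hiS, hσ ▸ hj⟩, hσ⟩
      · rintro ⟨⟨hiS, -⟩, hσ⟩; exact ⟨hiS, hσ⟩
    have hsum : ∑ j ∈ S, (S.filter (fun i => σ i = j)).card ≤ S.card := by
      have h1 : ∑ j ∈ S, (S.filter (fun i => σ i = j)).card =
          ∑ j ∈ S, ((S.filter (fun i => σ i ∈ S)).filter (fun i => σ i = j)).card :=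
        Finset.sum_congr rfl (fun j hj => by rw [hFeq j hj])
      have h2 : (S.filter (fun i => σ i ∈ S)).card =
          ∑ j ∈ S, ((S.filter (fun i => σ i ∈ S)).filter (fun i => σ i = j)).card :=
        Finset.card_eq_sum_card_fiberwise
          (fun i hi => (Finset.mem_filter.mp hi).2)
      rw [h1, ← h2]
      exact Finset.card_filter_le _ _
    have hall1 : ∀ j ∈ S, (S.filter (fun i => σ i = j)).card = 1 := by
      have hle : ∑ j ∈ S, 1 ≤ ∑ j ∈ S, (S.filter (fun i => σ i = j)).card :=
        Finset.sum_le_sum hF1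
      have hge : ∑ j ∈ S, (S.filter (fun i => σ i = j)).card ≤ ∑ j ∈ S, 1 := by
        rw [Finset.sum_const, smul_eq_mul, mul_one]
        exact hsum
      have heq : ∑ j ∈ S, (1 : ℕ) = ∑ j ∈ S, (S.filter (fun i => σ i = j)).card :=
        le_antisymm hle hge
      intro j hj
      exact ((Finset.sum_eq_sum_iff_of_le hF1).mp heq j hj).symm
    obtain ⟨j, hjS⟩ := hne
    obtain ⟨i, hiS, hσij, hij⟩ := hex j hjS
    have hFj : S.filter (fun i => σ i = j) = {i} := by
      obtain ⟨a, ha⟩ := Finset.card_eq_one.mp (hall1 j hjS)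
      have hiF : i ∈ S.filter (fun i => σ i = j) := Finset.mem_filter.mpr ⟨hiS, hσij⟩
      rw [ha] at hiF ⊢
      rw [Finset.mem_singleton.mp hiF]
    have hjS' : j ∈ S.erase i := Finset.mem_erase.mpr ⟨hij.symm, hjS⟩
    have hpre : ∀ l ∈ S.erase i, σ l ≠ j := by
      intro l hl hσl
      have hlS := Finset.mem_of_mem_erase hl
      have : l ∈ S.filter (fun i => σ i = j) := Finset.mem_filter.mpr ⟨hlS, hσl⟩
      rw [hFj, Finset.mem_singleton] at this
      exact Finset.ne_of_mem_erase hl this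
    obtain ⟨s'', hs''⟩ : ∃ s'', ((S.erase i).erase j).card = s'' := ⟨_, rfl⟩
    have hcard2 : S.card = s'' + 2 := by
      rw [← hs'', Finset.card_erase_of_mem hjS', Finset.card_erase_of_mem hiS]
      have h2 : 2 ≤ S.card := Finset.one_lt_card.mpr ⟨i, hiS, j, hjS, hij⟩
      omega
    have hmono : (auxFilter
          (fun f : ι → V => ∀ l ∈ S, N (f (σ l)) (f l))).card ≤
        (auxFilter
          (fun f : ι → V => ∀ l ∈ S.erase i, N (f (σ l)) (f l))).card :=
      auxFilter_card_mono
        (fun f hf l hl => hf l (Finset.mem_of_mem_erase hl))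
    have hstep := aux_step_count N m hm σ (S.erase i) j hjS' (hfix j hjS) hpre
    have hssub : (S.erase i).erase j ⊂ S :=
      (Finset.erase_ssubset hjS').trans_subset (Finset.erase_subset i S)
    have hIH := IH ((S.erase i).erase j) hssub
      (fun l hl => hfix l (Finset.mem_of_mem_erase (Finset.mem_of_mem_erase hl)))
    rw [hs''] at hIH
    rw [hcard2]
    calc (auxFilter (fun f : ι → V => ∀ l ∈ S, N (f (σ l)) (f l))).card *
          n ^ (s'' + 2)
        ≤ (auxFilter
            (fun f : ι → V => ∀ l ∈ S.erase i, N (f (σ l)) (f l))).card * n ^ (s'' + 2) :=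
          Nat.mul_le_mul_right _ hmono
      _ = ((auxFilter
            (fun f : ι → V => ∀ l ∈ S.erase i, N (f (σ l)) (f l))).card * n) *
            (n * n ^ s'') := by ring
      _ ≤ (m * (auxFilter
            (fun f : ι → V => ∀ l ∈ (S.erase i).erase j, N (f (σ l)) (f l))).card) *
            (n * n ^ s'') := Nat.mul_le_mul_right _ hstep
      _ = m * (n * ((auxFilter
            (fun f : ι → V => ∀ l ∈ (S.erase i).erase j, N (f (σ l)) (f l))).card *
            n ^ s'')) := by ring
      _ ≤ m * (n * (n ^ (Fintype.card ι) * (n ^ (s'' / 2) * m ^ (s'' - s'' / 2)))) := by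
          refine Nat.mul_le_mul_left _ (Nat.mul_le_mul_left _ hIH)
      _ = n ^ (Fintype.card ι) * (m * (n * (n ^ (s'' / 2) * m ^ (s'' - s'' / 2)))) := by ring
      _ ≤ n ^ (Fintype.card ι) *
            (n ^ ((s'' + 2) / 2) * m ^ ((s'' + 2) - (s'' + 2) / 2)) :=
          Nat.mul_le_mul_left _ (aux_pow_step2 n m s'')

end Counting

theorem kth_moment_bound_local_dependence (k : ℕ) (hk : 0 < k) (hke : Even k) :
    ∃ C : ℝ, 0 < C ∧
      ∀ {Ω : Type*} [MeasurableSpace Ω] (P : Measure Ω) [IsProbabilityMeasure P]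
        {V : Type*} [Fintype V] (Y : V → Ω → ℝ),
        (∀ z, Measurable (Y z)) →
        (∀ z, Integrable (Y z) P) →
        (∀ z, ∫ ω, Y z ω ∂P = 0) →
        ∀ M : ℝ,
        (∀ z, Integrable (fun ω => |Y z ω| ^ k) P) →
        (∀ z, ∫ ω, |Y z ω| ^ k ∂P ≤ M ^ k) →
        ∀ rel : V → V → Prop, Symmetric rel →
        ∀ D : ℕ, (∀ z, ({w | w ≠ z ∧ rel w z} : Set V).ncard ≤ D) →
        (∀ z : V, IndepFun (Y z)
          (fun ω => fun w : {w : V // w ≠ z ∧ ¬ rel w z} => Y w.1 ω) P) →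
        ∫ ω, (∑ z, Y z ω) ^ k ∂P ≤
          C * M ^ k * (Fintype.card V : ℝ) ^ (k / 2) * ((D : ℝ) + 1) ^ (k / 2) := by
  classical
  refine ⟨((k : ℝ) + 1) ^ (k + 1), by positivity, ?_⟩
  intro Ω _ P _ V _ Y hYm hYi hY0 M hYki hYkM rel hrel D hD hindep
  classical
  have hMk : (0 : ℝ) ≤ M ^ k := hke.pow_nonneg M
  have hkk2 : k - k / 2 = k / 2 := by
    have := Nat.even_iff.mp hke
    omega
  have hNefin : Nonempty (Fin k) := ⟨⟨0, hk⟩⟩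
  set n := Fintype.card V with hn
  -- integrability of partial products
  have key_int : ∀ (s : Finset (Fin k)) (f : Fin k → V),
      Integrable (fun ω => ∏ i ∈ s, Y (f i) ω) P := by
    intro s f
    have hmeas : Measurable (fun ω => ∏ i ∈ s, Y (f i) ω) :=
      Finset.measurable_prod s (fun i _ => hYm (f i))
    refine Integrable.mono'
      (g := fun ω => 1 + ∑ i ∈ s, |Y (f i) ω| ^ k)
      ((integrable_const 1).add (integrable_finset_sum s (fun i _ => hYki (f i))))
      hmeas.aestronglyMeasurable ?_
    refine Filter.Eventually.of_forall (fun ω => ?_)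
    rw [Real.norm_eq_abs, Finset.abs_prod]
    exact aux_prod_le_one_add_sum s (fun i => |Y (f i) ω|) (fun i => abs_nonneg _) k
      (le_trans (Finset.card_le_card (Finset.subset_univ s))
        (by simp))
  -- the "good" predicate
  set Good : (Fin k → V) → Prop :=
    fun f => ∀ j, ∃ i, i ≠ j ∧ (f i = f j ∨ rel (f i) (f j)) with hGood
  clear_value Good
  -- vanishing of expectations of bad products
  have vanish : ∀ f : Fin k → V, ¬ Good f → ∫ ω, ∏ i, Y (f i) ω ∂P = 0 := by
    intro f hbad
    simp only [hGood] at hbad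
    push_neg at hbad
    obtain ⟨j, hj⟩ := hbad
    have hj' : ∀ i, i ≠ j → f i ≠ f j ∧ ¬ rel (f i) (f j) := by
      intro i hi
      have := hj i hi
      tauto
    set T := {w : V // w ≠ f j ∧ ¬ rel w (f j)} with hT
    set g : (T → ℝ) → ℝ := fun y =>
      ∏ i ∈ (Finset.univ.erase j).attach,
        y ⟨f i.1, hj' i.1 (Finset.ne_of_mem_erase i.2)⟩ with hg
    have hgm : Measurable g :=
      Finset.measurable_prod _ (fun i _ => measurable_pi_apply _)
    have hcomp : (fun ω => ∏ i ∈ Finset.univ.erase j, Y (f i) ω) =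
        g ∘ (fun ω => fun w : T => Y w.1 ω) := by
      funext ω
      rw [hg]
      simp only [Function.comp]
      rw [← Finset.prod_attach (Finset.univ.erase j) (fun i => Y (f i) ω)]
    have hIndep2 : IndepFun (Y (f j))
        (fun ω => ∏ i ∈ Finset.univ.erase j, Y (f i) ω) P := by
      rw [hcomp]
      have := (hindep (f j)).comp measurable_id hgm
      simpa [Function.id_comp] using this
    have hsplit : (fun ω => ∏ i, Y (f i) ω) =
        Y (f j) * (fun ω => ∏ i ∈ Finset.univ.erase j, Y (f i) ω) := by
      funext ω
      simp only [Pi.mul_apply]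
      exact (Finset.mul_prod_erase Finset.univ (fun i => Y (f i) ω)
        (Finset.mem_univ j)).symm
    calc ∫ ω, ∏ i, Y (f i) ω ∂P
        = ∫ ω, (Y (f j) * (fun ω' => ∏ i ∈ Finset.univ.erase j, Y (f i) ω')) ω ∂P := by
          rw [← hsplit]
      _ = (∫ ω, Y (f j) ω ∂P) * ∫ ω, ∏ i ∈ Finset.univ.erase j, Y (f i) ω ∂P :=
          hIndep2.integral_mul_eq_mul_integral (hYi (f j)).aestronglyMeasurable (key_int _ f).aestronglyMeasurable
      _ = 0 := by rw [hY0 (f j), zero_mul]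
  -- uniform bound on expectations of products
  have bnd : ∀ f : Fin k → V, ∫ ω, ∏ i, Y (f i) ω ∂P ≤ (k : ℝ) * M ^ k := by
    intro f
    have hpt : ∀ ω, ∏ i, Y (f i) ω ≤ ∑ i : Fin k, |Y (f i) ω| ^ k := by
      intro ω
      calc ∏ i, Y (f i) ω ≤ |∏ i, Y (f i) ω| := le_abs_self _
        _ = ∏ i, |Y (f i) ω| := Finset.abs_prod _ _
        _ ≤ ∑ i : Fin k, |Y (f i) ω| ^ k :=
            aux_prod_le_sum_pow Finset.univ (fun i => |Y (f i) ω|)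
              (fun i => abs_nonneg _) k (by simp) Finset.univ_nonempty
    calc ∫ ω, ∏ i, Y (f i) ω ∂P
        ≤ ∫ ω, ∑ i : Fin k, |Y (f i) ω| ^ k ∂P :=
          integral_mono (key_int Finset.univ f)
            (integrable_finset_sum _ (fun i _ => hYki (f i)))
            (fun ω => hpt ω)
      _ = ∑ i : Fin k, ∫ ω, |Y (f i) ω| ^ k ∂P :=
          integral_finset_sum _ (fun i _ => hYki (f i))
      _ ≤ ∑ _i : Fin k, M ^ k := Finset.sum_le_sum (fun i _ => hYkM (f i))
      _ = (k : ℝ) * M ^ k := by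
          rw [Finset.sum_const, Finset.card_univ, Fintype.card_fin, nsmul_eq_mul]
  -- the counting bound
  set m := min n (D + 1) with hm
  set N : V → V → Prop := fun a b => a = b ∨ rel a b with hN
  clear_value N
  have hNfiber : ∀ w, (auxFilter (fun v => N w v)).card ≤ m := by
    intro w
    refine le_min ?_ ?_
    · rw [hn]
      exact auxFilter_card_le _
    · have hsubset : auxFilter (fun v => N w v) ⊆
          insert w (auxFilter (fun v => v ≠ w ∧ rel v w)) := by
        intro v hv
        have hv' := mem_auxFilter.mp hv
        rw [hN] at hv'
        rcases hv' with h | h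
        · exact Finset.mem_insert.mpr (Or.inl h.symm)
        · by_cases hvw : v = w
          · exact Finset.mem_insert.mpr (Or.inl hvw)
          · exact Finset.mem_insert.mpr (Or.inr (mem_auxFilter.mpr ⟨hvw, hrel h⟩))
      have hDcard : (auxFilter (fun v => v ≠ w ∧ rel v w)).card ≤ D := by
        have hconv : ({v | v ≠ w ∧ rel v w} : Set V).ncard =
            (auxFilter (fun v => v ≠ w ∧ rel v w)).card := by
          rw [Set.ncard_eq_toFinset_card']
          congr 1
          ext v
          simp [mem_auxFilter]
        have h := hD w
        rw [hconv] at h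
        exact h
      calc (auxFilter (fun v => N w v)).card
          ≤ (insert w (auxFilter (fun v => v ≠ w ∧ rel v w))).card :=
            Finset.card_le_card hsubset
        _ ≤ (auxFilter (fun v => v ≠ w ∧ rel v w)).card + 1 :=
            Finset.card_insert_le _ _
        _ ≤ D + 1 := Nat.add_le_add_right hDcard 1
  have hcount : (auxFilter Good).card ≤
      k ^ k * (n ^ (k / 2) * m ^ (k - k / 2)) := by
    set Λ := auxFilter (fun σ : Fin k → Fin k => ∀ j, σ j ≠ j) with hΛ
    have hsub : auxFilter Good ⊆
        Λ.biUnion (fun σ => auxFilter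
          (fun f : Fin k → V => ∀ i ∈ (Finset.univ : Finset (Fin k)),
            N (f (σ i)) (f i))) := by
      intro f hf
      have hGf := mem_auxFilter.mp hf
      simp only [hGood] at hGf
      choose g hg1 hg2 using hGf
      refine Finset.mem_biUnion.mpr ⟨g, ?_, ?_⟩
      · rw [hΛ]
        exact mem_auxFilter.mpr hg1
      · refine mem_auxFilter.mpr (fun i _ => ?_)
        rw [hN]
        exact hg2 i
    have hperσ : ∀ σ ∈ Λ,
        (auxFilter (fun f : Fin k → V => ∀ i ∈ (Finset.univ : Finset (Fin k)),
          N (f (σ i)) (f i))).card ≤ n ^ (k / 2) * m ^ (k - k / 2) := by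
      intro σ hσ
      rw [hΛ] at hσ
      have hσ' := mem_auxFilter.mp hσ
      by_cases hn0 : n = 0
      · have hbig : (auxFilter (fun f : Fin k → V =>
            ∀ i ∈ (Finset.univ : Finset (Fin k)), N (f (σ i)) (f i))).card ≤
            Fintype.card (Fin k → V) := auxFilter_card_le _
        rw [Fintype.card_fun, Fintype.card_fin, ← hn, hn0] at hbig
        rw [Nat.zero_pow hk] at hbig
        exact le_trans hbig (Nat.zero_le _)
      · have hmain := aux_count_le N m hNfiber (min_le_left _ _) σ
          (Finset.univ : Finset (Fin k)) (fun j _ => hσ' j)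
        rw [Finset.card_univ, Fintype.card_fin] at hmain
        rw [← hn] at hmain
        have hpos : 0 < n ^ k := Nat.pow_pos (Nat.pos_of_ne_zero hn0)
        refine Nat.le_of_mul_le_mul_right ?_ hpos
        calc _ ≤ n ^ k * (n ^ (k / 2) * m ^ (k - k / 2)) := hmain
          _ = (n ^ (k / 2) * m ^ (k - k / 2)) * n ^ k := mul_comm _ _
    calc (auxFilter Good).card
        ≤ (Λ.biUnion (fun σ => auxFilter
            (fun f : Fin k → V => ∀ i ∈ (Finset.univ : Finset (Fin k)),
              N (f (σ i)) (f i)))).card := Finset.card_le_card hsub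
      _ ≤ ∑ σ ∈ Λ, (auxFilter
            (fun f : Fin k → V => ∀ i ∈ (Finset.univ : Finset (Fin k)),
              N (f (σ i)) (f i))).card := Finset.card_biUnion_le
      _ ≤ ∑ _σ ∈ Λ, n ^ (k / 2) * m ^ (k - k / 2) :=
          Finset.sum_le_sum hperσ
      _ = Λ.card * (n ^ (k / 2) * m ^ (k - k / 2)) := by
          rw [Finset.sum_const, smul_eq_mul]
      _ ≤ k ^ k * (n ^ (k / 2) * m ^ (k - k / 2)) := by
          refine Nat.mul_le_mul_right _ ?_
          calc Λ.card ≤ Fintype.card (Fin k → Fin k) := auxFilter_card_le _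
            _ = k ^ k := by rw [Fintype.card_fun, Fintype.card_fin]
  -- natural-number form of the final bound
  have hNatIneq : (auxFilter Good).card * k ≤
      (k + 1) ^ (k + 1) * (n ^ (k / 2) * (D + 1) ^ (k / 2)) := by
    have hmD : m ^ (k - k / 2) ≤ (D + 1) ^ (k / 2) := by
      rw [hkk2]
      exact Nat.pow_le_pow_left (min_le_right _ _) _
    have hkC : k ^ k * k ≤ (k + 1) ^ (k + 1) := by
      calc k ^ k * k ≤ (k + 1) ^ k * (k + 1) :=
            Nat.mul_le_mul (Nat.pow_le_pow_left (Nat.le_succ k) k) (Nat.le_succ k)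
        _ = (k + 1) ^ (k + 1) := (pow_succ _ _).symm
    calc (auxFilter Good).card * k
        ≤ (k ^ k * (n ^ (k / 2) * m ^ (k - k / 2))) * k :=
          Nat.mul_le_mul_right _ hcount
      _ = (k ^ k * k) * (n ^ (k / 2) * m ^ (k - k / 2)) := by ring
      _ ≤ ((k + 1) ^ (k + 1)) * (n ^ (k / 2) * (D + 1) ^ (k / 2)) :=
          Nat.mul_le_mul hkC (Nat.mul_le_mul_left _ hmD)
  -- pointwise expansion of the k-th power
  have hexpand : ∀ ω, (∑ z, Y z ω) ^ k = ∑ f : Fin k → V, ∏ i, Y (f i) ω := by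
    intro ω
    calc (∑ z, Y z ω) ^ k = ∏ _i : Fin k, ∑ z, Y z ω := by
          rw [Finset.prod_const, Finset.card_univ, Fintype.card_fin]
      _ = ∑ p ∈ Fintype.piFinset (fun _ : Fin k => (Finset.univ : Finset V)),
            ∏ i, Y (p i) ω := Finset.prod_univ_sum _ _
      _ = ∑ f : Fin k → V, ∏ i, Y (f i) ω := by rw [Fintype.piFinset_univ]
  -- final chain
  calc ∫ ω, (∑ z, Y z ω) ^ k ∂P
      = ∫ ω, ∑ f : Fin k → V, ∏ i, Y (f i) ω ∂P := by simp_rw [hexpand]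
    _ = ∑ f : Fin k → V, ∫ ω, ∏ i, Y (f i) ω ∂P :=
        integral_finset_sum _ (fun f _ => key_int Finset.univ f)
    _ = ∑ f ∈ auxFilter Good, ∫ ω, ∏ i, Y (f i) ω ∂P :=
        (Finset.sum_subset (Finset.subset_univ _)
          (fun f _ hf => vanish f
            (fun hGf => hf (mem_auxFilter.mpr hGf)))).symm
    _ ≤ ∑ _f ∈ auxFilter Good, (k : ℝ) * M ^ k :=
        Finset.sum_le_sum (fun f _ => bnd f)
    _ = ((auxFilter Good).card : ℝ) * ((k : ℝ) * M ^ k) := by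
        rw [Finset.sum_const, nsmul_eq_mul]
    _ = (((auxFilter Good).card * k : ℕ) : ℝ) * M ^ k := by
        push_cast; ring
    _ ≤ (((k + 1) ^ (k + 1) * (n ^ (k / 2) * (D + 1) ^ (k / 2)) : ℕ) : ℝ) * M ^ k :=
        mul_le_mul_of_nonneg_right (Nat.cast_le.mpr hNatIneq) hMk
    _ = ((k : ℝ) + 1) ^ (k + 1) * M ^ k * (n : ℝ) ^ (k / 2) * ((D : ℝ) + 1) ^ (k / 2) := by
        push_cast; ring
end
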